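/- arXiv:math/0306215 — 2 statements merged into one kernel-verified Lean document; each statement's English description precedes it below -/
import Mathlib

section
/- Let k ≥ 0, l ≥ 1, a ≥ 1, b ≥ 2 with k+3l = a+2b. Then K^{-1}_{(1^k,3^l),(1^a,2^b)} = −K^{-1}_{(1^k,3^{l−1}),(1^{a−1},2^{b−1})} − K^{-1}_{(1^k,3^{l−1}),(1^{a+1},2^{b−2})}, where all three inverse Kostka numbers concern partitions of the appropriate common weights (k+3l on the left, k+3(l−1) on the right). -/
open Finset MvPolynomial

/-- The `p`-th entry of an `n`-tuple, with default value `0` out of range. -/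
def nth (n : ℕ) (f : Fin n → ℕ) (p : ℕ) : ℕ := if h : p < n then f ⟨p, h⟩ else 0

/-- `a_α = det (x_j ^ α_i)`. -/
noncomputable def aDet (n : ℕ) (α : Fin n → ℕ) : MvPolynomial (Fin n) ℤ :=
  (Matrix.of fun i j : Fin n => (X j : MvPolynomial (Fin n) ℤ) ^ α i).det

/-- `x ^ β = ∏ x_i ^ β_i`. -/
noncomputable def xpow (n : ℕ) (β : Fin n → ℕ) : MvPolynomial (Fin n) ℤ :=
  ∏ i, X i ^ β i

/-- The monomial symmetric polynomial `m_lam(n) = Σ_{w ∈ Sₙ^lam} x^{w(lam)}`: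
the sum of `x^β` over all distinct rearrangements `β` of `lam`. -/
noncomputable def msym (n : ℕ) (lam : Fin n → ℕ) : MvPolynomial (Fin n) ℤ :=
  ∑ β ∈ Finset.univ.image (fun σ : Equiv.Perm (Fin n) => lam ∘ σ), xpow n β

/-- `δ(n) = (0, 1, …, n-1)`. -/
def deltaN (n : ℕ) : Fin n → ℕ := fun i => (i : ℕ)

/-- `P(m∣n)`: partitions of `m` as nondecreasing `n`-tuples (zeros at the beginning). -/
def Par (n m : ℕ) : Finset (Fin n → ℕ) :=
  (Fintype.piFinset fun _ : Fin n => Finset.range (m + 1)).filter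
    fun μ => (∀ i j : Fin n, i ≤ j → μ i ≤ μ j) ∧ ∑ i, μ i = m

/-- `K` is the inverse Kostka matrix in `n` variables: for every weight `m` and
every `lam ∈ P(m∣n)`, `m_lam(n) · a_{δ(n)} = Σ_{μ ∈ P(m∣n)} K lam μ · a_{μ+δ(n)}`
(equivalently `m_lam(n) = Σ_μ K lam μ · s_μ(n)`). -/
def IsInvKostka (n : ℕ) (K : (Fin n → ℕ) → (Fin n → ℕ) → ℤ) : Prop :=
  ∀ m : ℕ, ∀ lam ∈ Par n m,
    msym n lam * aDet n (deltaN n) =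
      ∑ μ ∈ Par n m, C (K lam μ) * aDet n (fun i => μ i + (i : ℕ))

/-- The partition `(1^a, 2^b, 3^c)` as a nondecreasing `n`-tuple
(requires `a + b + c ≤ n`). -/
def tuple3 (n a b c : ℕ) : Fin n → ℕ :=
  fun i => if (i : ℕ) < n - a - b - c then 0
    else if (i : ℕ) < n - b - c then 1
    else if (i : ℕ) < n - c then 2 else 3



noncomputable section
namespace Stmt17Aux

abbrev R2 : Type := MvPolynomial (Fin 2) ℤ

def px : R2 := X 0
def py : R2 := X 1

/-- matrix entry: `1, x, y` according to difference `0, 1, 3`. -/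
def phi (u w : ℕ) : R2 :=
  if u = w then 1 else if u = w + 1 then px else if u = w + 3 then py else 0

/-- The "elementary symmetric" polynomials for the alphabet `{h1 = x, h3 = y}`. -/
def Epol : ℕ → R2
  | 0 => 1
  | 1 => px
  | 2 => px ^ 2
  | (r + 3) => px * Epol (r + 2) + py * Epol r

/-- signed version, entries of the inverse band matrix. -/
def Df (u w : ℕ) : R2 := if w ≤ u then (-1) ^ (u - w) * Epol (u - w) else 0

/-- unsigned version. -/
def Ef (u w : ℕ) : R2 := if w ≤ u then Epol (u - w) else 0

lemma Df_eq (u w : ℕ) : Df u w = (-1) ^ (u - w) * Ef u w := by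
  unfold Df Ef
  split_ifs <;> simp

lemma Df_zero {u w : ℕ} (h : u < w) : Df u w = 0 := by
  unfold Df; rw [if_neg (by omega)]

/-- The key inverse relation. -/
lemma Drec (u j : ℕ) :
    Df u j + px * Df u (j + 1) + py * Df u (j + 3) = if u = j then 1 else 0 := by
  rcases Nat.lt_or_ge u j with h | h
  · rw [Df_zero h, Df_zero (by omega), Df_zero (by omega), if_neg (by omega)]
    ring
  · obtain ⟨r, rfl⟩ : ∃ r, u = j + r := ⟨u - j, by omega⟩
    unfold Df
    match r with
    | 0 =>
      rw [if_pos (by omega), if_neg (by omega), if_neg (by omega), if_pos (by omega)]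
      simp [Epol]
    | 1 =>
      rw [if_pos (by omega), if_pos (by omega), if_neg (by omega), if_neg (by omega)]
      have h1 : j + 1 - j = 1 := by omega
      have h2 : j + 1 - (j + 1) = 0 := by omega
      rw [h1, h2]
      show (-1:R2) ^ 1 * Epol 1 + px * ((-1) ^ 0 * Epol 0) + py * 0 = 0
      rw [show Epol 1 = px from rfl, show Epol 0 = 1 from rfl]; ring
    | 2 =>
      rw [if_pos (by omega), if_pos (by omega), if_neg (by omega), if_neg (by omega)]
      have h1 : j + 2 - j = 2 := by omega
      have h2 : j + 2 - (j + 1) = 1 := by omega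
      rw [h1, h2]
      show (-1:R2) ^ 2 * Epol 2 + px * ((-1) ^ 1 * Epol 1) + py * 0 = 0
      rw [show Epol 2 = px ^ 2 from rfl, show Epol 1 = px from rfl]; ring
    | (s + 3) =>
      rw [if_pos (by omega), if_pos (by omega), if_pos (by omega), if_neg (by omega)]
      have h1 : j + (s + 3) - j = s + 3 := by omega
      have h2 : j + (s + 3) - (j + 1) = s + 2 := by omega
      have h3 : j + (s + 3) - (j + 3) = s := by omega
      rw [h1, h2, h3]
      show (-1:R2) ^ (s + 3) * Epol (s + 3) + px * ((-1) ^ (s + 2) * Epol (s + 2))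
          + py * ((-1) ^ s * Epol s) = 0
      rw [show Epol (s + 3) = px * Epol (s + 2) + py * Epol s from rfl]
      ring

lemma phi_split (u w : ℕ) :
    phi u w = (if u = w then 1 else 0) + (if u = w + 1 then px else 0)
      + (if u = w + 3 then py else 0) := by
  unfold phi
  split_ifs <;> first | (exfalso; omega) | ring

lemma even_neg_one_pow {e : ℕ} (h : Even e) : ((-1 : R2)) ^ e = 1 := Even.neg_one_pow h


section DetPart
variable (n p q : ℕ)

/-- the full `(n+2) × (n+2)` bordered matrix. -/
def Shat : Matrix (Fin (n + 2)) (Fin (n + 2)) R2 :=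
  Matrix.of fun i j => if (j : ℕ) < n then phi i j
    else if (j : ℕ) = n then (if (i : ℕ) = p then 1 else 0)
    else (if (i : ℕ) = q then 1 else 0)

/-- the inverse unitriangular band matrix. -/
def Bp : Matrix (Fin (n + 2)) (Fin (n + 2)) R2 := Matrix.of fun i j => Df i j

/-- the product `Bp * Shat`. -/
def Gm : Matrix (Fin (n + 2)) (Fin (n + 2)) R2 :=
  Matrix.of fun i j => if (j : ℕ) < n then (if (i : ℕ) = (j : ℕ) then 1 else 0)
    else if (j : ℕ) = n then Df i p else Df i q

lemma sumFinIte (c : ℕ) (g : ℕ → R2) :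
    (∑ v : Fin (n + 2), if (v : ℕ) = c then g (v : ℕ) else 0)
      = if c < n + 2 then g c else 0 := by
  split_ifs with h
  · rw [Finset.sum_eq_single (⟨c, h⟩ : Fin (n + 2))]
    · simp
    · intro v _ hv
      rw [if_neg (fun hc => hv (Fin.ext hc))]
    · intro hc; exact absurd (Finset.mem_univ _) hc
  · apply Finset.sum_eq_zero
    intro v _
    rw [if_neg (by omega)]

lemma det_Bp : (Bp n).det = 1 := by
  have h : (Bp n).det = ∏ i : Fin (n + 2), (Bp n) i i := by
    apply Matrix.det_of_lowerTriangular
    intro i j hij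
    show Df i j = 0
    exact Df_zero hij
  rw [h]
  apply Finset.prod_eq_one
  intro i _
  show Df i i = 1
  unfold Df
  rw [if_pos (le_refl _)]
  simp [Epol]

lemma Bp_mul_Shat (hpq : p < q) (hq : q ≤ n + 1) : Bp n * Shat n p q = Gm n p q := by
  refine Matrix.ext fun i j => ?_
  rw [Matrix.mul_apply]
  show (∑ v : Fin (n+2), Df i v * Shat n p q v j) = Gm n p q i j
  rcases Nat.lt_or_ge (j : ℕ) n with hj | hj
  · have hstep : ∀ v : Fin (n + 2), Df i v * Shat n p q v j
        = (if (v : ℕ) = (j : ℕ) then Df i (v : ℕ) else 0)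
          + ((if (v : ℕ) = (j : ℕ) + 1 then px * Df i (v : ℕ) else 0)
          + (if (v : ℕ) = (j : ℕ) + 3 then py * Df i (v : ℕ) else 0)) := by
      intro v
      show Df i v * (if (j:ℕ) < n then phi v j else _) = _
      rw [if_pos hj, phi_split]
      split_ifs <;> first | (exfalso; omega) | ring
    rw [Finset.sum_congr rfl (fun v _ => hstep v), Finset.sum_add_distrib,
      Finset.sum_add_distrib, sumFinIte, sumFinIte n _ (fun c => px * Df i c),
      sumFinIte n _ (fun c => py * Df i c)]
    rw [if_pos (by omega), if_pos (by omega)]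
    have hlast : (if (j : ℕ) + 3 < n + 2 then py * Df i ((j:ℕ)+3) else 0)
        = py * Df i ((j:ℕ) + 3) := by
      split_ifs with h
      · rfl
      · rw [Df_zero (by omega)]; ring
    rw [hlast, ← add_assoc, Drec]
    show _ = if (j : ℕ) < n then _ else _
    rw [if_pos hj]
  · rcases Nat.eq_or_lt_of_le hj with hjn | hjn
    · have hstep : ∀ v : Fin (n + 2), Df i v * Shat n p q v j
          = (if (v : ℕ) = p then Df i (v : ℕ) else 0) := by
        intro v
        show Df i v * (if (j:ℕ) < n then phi v j else _) = _
        rw [if_neg (by omega), if_pos hjn.symm]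
        split_ifs <;> first | (exfalso; omega) | ring
      rw [Finset.sum_congr rfl (fun v _ => hstep v), sumFinIte, if_pos (by omega)]
      show _ = if (j : ℕ) < n then _ else if (j : ℕ) = n then Df i p else Df i q
      rw [if_neg (by omega), if_pos hjn.symm]
    · have hstep : ∀ v : Fin (n + 2), Df i v * Shat n p q v j
          = (if (v : ℕ) = q then Df i (v : ℕ) else 0) := by
        intro v
        show Df i v * (if (j:ℕ) < n then phi v j else _) = _
        rw [if_neg (by omega), if_neg (by omega)]
        split_ifs <;> first | (exfalso; omega) | ring
      rw [Finset.sum_congr rfl (fun v _ => hstep v), sumFinIte, if_pos (by omega)]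
      show _ = if (j : ℕ) < n then _ else if (j : ℕ) = n then Df i p else Df i q
      rw [if_neg (by omega), if_neg (by omega)]

def Wb : Matrix (Fin 2) (Fin 2) R2 :=
  Matrix.of fun s t => Df (n + (s : ℕ)) (if (t : ℕ) = 0 then p else q)

def Cb : Matrix (Fin n) (Fin 2) R2 :=
  Matrix.of fun i t => Df (i : ℕ) (if (t : ℕ) = 0 then p else q)

lemma Gm_reindex :
    (Gm n p q).submatrix finSumFinEquiv finSumFinEquiv
      = Matrix.fromBlocks 1 (Cb n p q) 0 (Wb n p q) := by
  refine Matrix.ext fun i j => ?_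
  rcases i with i | s <;> rcases j with j | t <;>
    simp only [Matrix.submatrix_apply, finSumFinEquiv_apply_left, finSumFinEquiv_apply_right,
      Matrix.fromBlocks_apply₁₁, Matrix.fromBlocks_apply₁₂, Matrix.fromBlocks_apply₂₁,
      Matrix.fromBlocks_apply₂₂]
  · show (if ((Fin.castAdd 2 j : Fin (n+2)) : ℕ) < n then _ else _) = _
    rw [Fin.coe_castAdd, if_pos j.isLt]
    show (if ((Fin.castAdd 2 i : Fin (n+2)) : ℕ) = (j : ℕ) then (1:R2) else 0) = _
    rw [Fin.coe_castAdd, Matrix.one_apply]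
    congr 1
    simp [Fin.ext_iff]
  · show (if ((Fin.natAdd n t : Fin (n+2)) : ℕ) < n then _ else _) = _
    rw [Fin.coe_natAdd, if_neg (by omega)]
    show (if n + (t:ℕ) = n then Df _ p else Df _ q)
      = Df ((Fin.castAdd 2 i : Fin (n+2)) : ℕ) (if (t : ℕ) = 0 then p else q)
    have htlt := t.isLt
    rcases (by omega : (t:ℕ) = 0 ∨ (t:ℕ) = 1) with ht | ht <;>
      rw [ht] <;> simp [Fin.coe_castAdd]
  · show (if ((Fin.castAdd 2 j : Fin (n+2)) : ℕ) < n then _ else _) = (0 : Matrix _ _ R2) s j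
    rw [Fin.coe_castAdd, if_pos j.isLt]
    show (if ((Fin.natAdd n s : Fin (n+2)) : ℕ) = (j : ℕ) then (1:R2) else 0) = 0
    rw [Fin.coe_natAdd, if_neg (by omega)]
  · show (if ((Fin.natAdd n t : Fin (n+2)) : ℕ) < n then _ else _) = Wb n p q s t
    rw [Fin.coe_natAdd, if_neg (by omega)]
    show (if n + (t:ℕ) = n then Df _ p else Df _ q)
      = Df (n + (s:ℕ)) (if (t : ℕ) = 0 then p else q)
    have htlt := t.isLt
    rcases (by omega : (t:ℕ) = 0 ∨ (t:ℕ) = 1) with ht | ht <;>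
      rw [ht] <;> simp [Fin.coe_natAdd]

lemma det_Shat (hpq : p < q) (hq : q ≤ n + 1) :
    (Shat n p q).det = Df n p * Df (n + 1) q - Df n q * Df (n + 1) p := by
  have h1 : (Shat n p q).det = (Gm n p q).det := by
    rw [← Bp_mul_Shat n p q hpq hq, Matrix.det_mul, det_Bp, one_mul]
  rw [h1, ← Matrix.det_submatrix_equiv_self finSumFinEquiv, Gm_reindex,
    Matrix.det_fromBlocks_zero₂₁, Matrix.det_one, one_mul, Matrix.det_fin_two]
  show Df (n + ((0 : Fin 2) : ℕ)) p * Df (n + ((1 : Fin 2) : ℕ)) q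
      - Df (n + ((0 : Fin 2) : ℕ)) q * Df (n + ((1 : Fin 2) : ℕ)) p = _
  norm_num

end DetPart

section Collapse
variable (n p q : ℕ)

/-- the row-position function: `rho p q` enumerates `[0, n+1] \ {p, q}` increasingly. -/
def rho (p q i : ℕ) : ℕ :=
  (i + if p ≤ i then 1 else 0) + (if q ≤ i + (if p ≤ i then 1 else 0) then 1 else 0)

/-- the `n × n` matrix whose rows are indexed by values `v i`. -/
def Cmat (v : Fin n → ℕ) : Matrix (Fin n) (Fin n) R2 :=
  Matrix.of fun i j => phi (v i) (j : ℕ)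

lemma succAbove_val {m : ℕ} (c : Fin (m + 1)) (i : Fin m) :
    ((c.succAbove i) : ℕ) = if (i : ℕ) < (c : ℕ) then (i : ℕ) else (i : ℕ) + 1 := by
  by_cases h : (i : ℕ) < (c : ℕ)
  · rw [if_pos h, Fin.succAbove_of_castSucc_lt c i (by rwa [Fin.lt_def, Fin.coe_castSucc])]
    rw [Fin.coe_castSucc]
  · rw [if_neg h, Fin.succAbove_of_le_castSucc c i (by rw [Fin.le_def, Fin.coe_castSucc]; omega)]
    rw [Fin.val_succ]

lemma ef_self_mul (e : ℕ) : ((-1 : R2) ^ e) * ((-1) ^ e) = 1 := by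
  rw [← pow_add, Even.neg_one_pow ⟨e, rfl⟩]

lemma det_Shat_expand (hpq : p < q) (hq : q ≤ n + 1) :
    (Shat n p q).det = (-1) ^ (q + (n + 1)) * ((-1) ^ (p + n) *
      (Cmat n (fun i => rho p q (i : ℕ))).det) := by
  have hq2 : q < n + 2 := by omega
  have hp1 : p < n + 1 := by omega
  set qF : Fin (n + 2) := ⟨q, hq2⟩ with hqF
  set pF : Fin (n + 1) := ⟨p, hp1⟩ with hpF
  rw [Matrix.det_succ_column (Shat n p q) (Fin.last (n + 1))]
  rw [Finset.sum_eq_single qF]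
  · have hentry : Shat n p q qF (Fin.last (n + 1)) = 1 := by
      show (if ((Fin.last (n+1) : Fin (n+2)) : ℕ) < n then _ else _) = (1 : R2)
      rw [Fin.val_last, if_neg (by omega), if_neg (by omega), if_pos rfl]
    rw [hentry, mul_one, Fin.val_last]
    congr 1
    rw [Fin.succAbove_last]
    -- second expansion
    rw [Matrix.det_succ_column _ (Fin.last n)]
    rw [Finset.sum_eq_single pF]
    · have hentry2 : (Shat n p q).submatrix qF.succAbove Fin.castSucc pF (Fin.last n) = 1 := by
        show Shat n p q (qF.succAbove pF) (Fin.castSucc (Fin.last n)) = 1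
        show (if ((Fin.castSucc (Fin.last n) : Fin (n+2)) : ℕ) < n then _ else _) = (1 : R2)
        rw [Fin.coe_castSucc, Fin.val_last, if_neg (by omega), if_pos rfl, if_pos]
        rw [succAbove_val]
        show (if (p : ℕ) < q then p else p + 1) = p
        rw [if_pos hpq]
      rw [hentry2, mul_one]
      show _ = (-1 : R2) ^ (p + n) * _
      rw [Fin.succAbove_last]
      congr 1
      refine congrArg Matrix.det (Matrix.ext fun i j => ?_)
      show Shat n p q (qF.succAbove (pF.succAbove i)) (Fin.castSucc (Fin.castSucc j))
          = phi (rho p q (i : ℕ)) (j : ℕ)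
      have hcol : ((Fin.castSucc (Fin.castSucc j) : Fin (n + 2)) : ℕ) = (j : ℕ) := by
        rw [Fin.coe_castSucc, Fin.coe_castSucc]
      have hrow : ((qF.succAbove (pF.succAbove i)) : ℕ) = rho p q (i : ℕ) := by
        rw [succAbove_val, succAbove_val]
        have hh1 : (pF : ℕ) = p := rfl
        have hh2 : (qF : ℕ) = q := rfl
        rw [hh1, hh2]
        unfold rho
        split_ifs <;> omega
      show (if ((Fin.castSucc (Fin.castSucc j) : Fin (n+2)) : ℕ) < n then
          phi ((qF.succAbove (pF.succAbove i)) : ℕ) ((Fin.castSucc (Fin.castSucc j) : Fin (n+2)) : ℕ)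
          else _) = _
      rw [hcol, if_pos j.isLt, hrow]
    · intro i _ hi
      have hentry0 : (Shat n p q).submatrix qF.succAbove Fin.castSucc i (Fin.last n) = 0 := by
        show Shat n p q (qF.succAbove i) (Fin.castSucc (Fin.last n)) = 0
        show (if ((Fin.castSucc (Fin.last n) : Fin (n+2)) : ℕ) < n then _ else _) = (0 : R2)
        rw [Fin.coe_castSucc, Fin.val_last, if_neg (by omega), if_pos rfl, if_neg]
        rw [succAbove_val]
        intro hcontra
        apply hi
        apply Fin.ext
        show (i : ℕ) = p
        by_cases hlt : (i : ℕ) < q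
        · rw [if_pos hlt] at hcontra; exact hcontra
        · rw [if_neg hlt] at hcontra; omega
      rw [hentry0, mul_zero, zero_mul]
    · intro h; exact absurd (Finset.mem_univ _) h
  · intro i _ hi
    have hentry0 : Shat n p q i (Fin.last (n + 1)) = 0 := by
      show (if ((Fin.last (n+1) : Fin (n+2)) : ℕ) < n then _ else _) = (0 : R2)
      rw [Fin.val_last, if_neg (by omega), if_neg (by omega), if_neg]
      intro hcontra
      exact hi (Fin.ext hcontra)
    rw [hentry0, mul_zero, zero_mul]
  · intro h; exact absurd (Finset.mem_univ _) h

lemma Ef_val {u w r : ℕ} (h : w ≤ u) (h2 : u - w = r) : Ef u w = Epol r := by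
  unfold Ef; rw [if_pos h, h2]

lemma Ef_zero {u w : ℕ} (h : u < w) : Ef u w = 0 := by
  unfold Ef; rw [if_neg (by omega)]

lemma det_Cmat_rho (hpq : p < q) (hq : q ≤ n + 1) :
    (Cmat n (fun i => rho p q (i : ℕ))).det
      = Ef n p * Ef (n + 1) q - Ef (n + 1) p * Ef n q := by
  have h := det_Shat_expand n p q hpq hq
  rw [det_Shat n p q hpq hq] at h
  set s1 : R2 := (-1) ^ (q + (n + 1)) with hs1
  set s2 : R2 := (-1) ^ (p + n) with hs2
  set dC := (Cmat n (fun i => rho p q (i : ℕ))).det with hdC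
  have key : dC = (s1 * s2) * (Df n p * Df (n + 1) q - Df n q * Df (n + 1) p) := by
    have h2 := congrArg (fun z => (s1 * s2) * z) h
    rw [show (s1 * s2) * (s1 * (s2 * dC)) = (s1 * s1) * ((s2 * s2) * dC) from by ring,
      hs1, hs2, ef_self_mul, ef_self_mul, one_mul, one_mul] at h2
    exact h2.symm
  rw [key, Df_eq, Df_eq, Df_eq, Df_eq, hs1, hs2]
  by_cases hqn : q ≤ n
  · have e1 : ((-1 : R2) ^ (q + (n+1)) * (-1) ^ (p + n)) * ((-1) ^ (n - p) * (-1) ^ (n + 1 - q)) = 1 := by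
      rw [← pow_add, ← pow_add, ← pow_add]
      exact Even.neg_one_pow (by rw [Nat.even_iff]; omega)
    have e2 : ((-1 : R2) ^ (q + (n+1)) * (-1) ^ (p + n)) * ((-1) ^ (n - q) * (-1) ^ (n + 1 - p)) = 1 := by
      rw [← pow_add, ← pow_add, ← pow_add]
      exact Even.neg_one_pow (by rw [Nat.even_iff]; omega)
    linear_combination (Ef n p * Ef (n + 1) q) * e1 - (Ef n q * Ef (n + 1) p) * e2
  · have hq2 : q = n + 1 := by omega
    subst hq2
    rw [Ef_zero (show n < n + 1 by omega)]
    have e1 : ((-1 : R2) ^ ((n+1) + (n+1)) * (-1) ^ (p + n)) * ((-1) ^ (n - p) * (-1) ^ (n + 1 - (n+1))) = 1 := by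
      rw [← pow_add, ← pow_add, ← pow_add]
      exact Even.neg_one_pow (by rw [Nat.even_iff]; omega)
    linear_combination (Ef n p * Ef (n + 1) (n + 1)) * e1

end Collapse

lemma Epol_rec (r : ℕ) : Epol (r + 3) = px * Epol (r + 2) + py * Epol r := rfl

lemma det_identity (n z a b : ℕ) (ha : 1 ≤ a) (hb : 2 ≤ b) (hzn : z + a + b = n) :
    (Cmat n (fun i => rho z (z + a + 1) (i : ℕ))).det
      + py * (Cmat n (fun i => rho (z + 2) (z + a + 2) (i : ℕ))).det
      + py * (Cmat n (fun i => rho (z + 1) (z + a + 3) (i : ℕ))).det = 0 := by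
  obtain ⟨a1, rfl⟩ : ∃ a1, a = a1 + 1 := ⟨a - 1, by omega⟩
  obtain ⟨c, rfl⟩ : ∃ c, b = c + 2 := ⟨b - 2, by omega⟩
  rw [det_Cmat_rho n z (z + (a1 + 1) + 1) (by omega) (by omega),
    det_Cmat_rho n (z + 2) (z + (a1 + 1) + 2) (by omega) (by omega),
    det_Cmat_rho n (z + 1) (z + (a1 + 1) + 3) (by omega) (by omega)]
  rw [Ef_val (u := n) (w := z) (by omega) (show n - z = a1 + c + 3 by omega),
    Ef_val (u := n + 1) (w := z + (a1+1) + 1) (by omega) (show n + 1 - (z + (a1+1) + 1) = c + 2 by omega),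
    Ef_val (u := n + 1) (w := z) (by omega) (show n + 1 - z = a1 + c + 4 by omega),
    Ef_val (u := n) (w := z + (a1+1) + 1) (by omega) (show n - (z + (a1+1) + 1) = c + 1 by omega),
    Ef_val (u := n) (w := z + 2) (by omega) (show n - (z + 2) = a1 + c + 1 by omega),
    Ef_val (u := n + 1) (w := z + (a1+1) + 2) (by omega) (show n + 1 - (z + (a1+1) + 2) = c + 1 by omega),
    Ef_val (u := n + 1) (w := z + 2) (by omega) (show n + 1 - (z + 2) = a1 + c + 2 by omega),
    Ef_val (u := n) (w := z + (a1+1) + 2) (by omega) (show n - (z + (a1+1) + 2) = c by omega),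
    Ef_val (u := n) (w := z + 1) (by omega) (show n - (z + 1) = a1 + c + 2 by omega),
    Ef_val (u := n + 1) (w := z + (a1+1) + 3) (by omega) (show n + 1 - (z + (a1+1) + 3) = c by omega),
    Ef_val (u := n + 1) (w := z + 1) (by omega) (show n + 1 - (z + 1) = a1 + c + 3 by omega)]
  rw [show a1 + c + 4 = (a1 + c + 1) + 3 from by omega, Epol_rec (a1 + c + 1),
    show a1 + c + 1 + 2 = a1 + c + 3 from by omega]
  match c with
  | 0 =>
    rw [Ef_zero (show n < z + (a1+1) + 3 by omega)]
    rw [show (0:ℕ) + 2 = 2 from rfl, show (0:ℕ) + 1 = 1 from rfl,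
      show Epol 2 = px ^ 2 from rfl, show Epol 1 = px from rfl, show Epol 0 = 1 from rfl]
    ring
  | (c1 + 1) =>
    rw [Ef_val (u := n) (w := z + (a1+1) + 3) (by omega) (show n - (z + (a1+1) + 3) = c1 by omega)]
    rw [show c1 + 1 + 2 = c1 + 3 from by omega, Epol_rec c1,
      show c1 + 2 = c1 + 1 + 1 from by omega]
    ring

end Stmt17Aux

namespace Stmt17Aux

variable {n : ℕ}

/-- exponent function as a finsupp -/
def expF (n : ℕ) (g : Fin n → ℕ) : Fin n →₀ ℕ := Finsupp.equivFunOnFinite.symm g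

lemma expF_apply (g : Fin n → ℕ) (i : Fin n) : expF n g i = g i := rfl

lemma expF_inj {g h : Fin n → ℕ} (he : expF n g = expF n h) : g = h := by
  have := congrArg (⇑Finsupp.equivFunOnFinite) he
  simpa [expF] using this

lemma xpow_eq (β : Fin n → ℕ) : xpow n β = monomial (expF n β) 1 := by
  rw [monomial_eq, C_1, one_mul, Finsupp.prod_fintype _ _ (fun i => pow_zero (X i))]
  rfl

lemma aDet_expand (α : Fin n → ℕ) :
    aDet n α = ∑ σ : Equiv.Perm (Fin n),
      Equiv.Perm.sign σ • monomial (expF n (fun i => α (σ i))) 1 := by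
  unfold aDet
  rw [Matrix.det_apply]
  refine Finset.sum_congr rfl fun σ _ => ?_
  congr 1
  rw [← xpow_eq]
  unfold xpow
  rfl

/-- a permutation that is strictly monotone is the identity -/
lemma perm_strictMono_eq_one {σ : Equiv.Perm (Fin n)} (hσ : StrictMono ⇑σ) :
    ∀ i, σ i = i := by
  have h : ⇑σ = id := by
    refine (hσ.range_inj (strictMono_id : StrictMono (id : Fin n → Fin n))).1 ?_
    rw [σ.surjective.range_eq, Set.range_id]
  intro i; rw [h]; rfl

lemma coeff_aDet {μ ν : Fin n → ℕ} (hμ : ∀ i j : Fin n, i ≤ j → μ i ≤ μ j)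
    (hν : ∀ i j : Fin n, i ≤ j → ν i ≤ ν j) :
    coeff (expF n (fun i => μ i + (i : ℕ))) (aDet n (fun i => ν i + (i : ℕ)))
      = if ν = μ then 1 else 0 := by
  rw [aDet_expand, coeff_sum]
  have hterm : ∀ σ : Equiv.Perm (Fin n),
      coeff (expF n (fun i => μ i + (i : ℕ)))
        (Equiv.Perm.sign σ • monomial (expF n (fun i => ν (σ i) + ((σ i) : ℕ))) 1)
      = Equiv.Perm.sign σ •
        (if expF n (fun i => ν (σ i) + ((σ i) : ℕ)) = expF n (fun i => μ i + (i : ℕ))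
          then (1:ℤ) else 0) := by
    intro σ
    rw [coeff_smul, coeff_monomial]
  rw [Finset.sum_congr rfl fun σ _ => hterm σ]
  have hsm : ∀ i j : Fin n, i < j → ν i + (i : ℕ) < ν j + (j : ℕ) := by
    intro i j hij
    have h1 := hν i j (le_of_lt hij)
    have h2 : (i:ℕ) < (j:ℕ) := hij
    omega
  have hsm2 : ∀ i j : Fin n, i < j → μ i + (i : ℕ) < μ j + (j : ℕ) := by
    intro i j hij
    have h1 := hμ i j (le_of_lt hij)
    have h2 : (i:ℕ) < (j:ℕ) := hij
    omega
  have hkey : ∀ σ : Equiv.Perm (Fin n),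
      expF n (fun i => ν (σ i) + ((σ i) : ℕ)) = expF n (fun i => μ i + (i : ℕ)) →
      σ = 1 ∧ ν = μ := by
    intro σ he
    have hfe : ∀ i, ν (σ i) + ((σ i) : ℕ) = μ i + (i : ℕ) := fun i => congrFun (expF_inj he) i
    have hσm : StrictMono ⇑σ := by
      intro i j hij
      rcases lt_trichotomy (σ i) (σ j) with h | h | h
      · exact h
      · exact absurd (σ.injective h) (ne_of_lt hij)
      · have h3 := hsm _ _ h
        have h4 := hsm2 _ _ hij
        have h5 := hfe i
        have h6 := hfe j
        omega
    have hid := perm_strictMono_eq_one hσm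
    constructor
    · exact Equiv.ext fun i => hid i
    · funext i
      have h5 := hfe i
      rw [hid i] at h5
      omega
  by_cases hνμ : ν = μ
  · subst hνμ
    rw [Finset.sum_eq_single (1 : Equiv.Perm (Fin n))]
    · simp
    · intro σ _ hσ
      rw [if_neg, smul_zero]
      intro hcon
      exact hσ (hkey σ hcon).1
    · intro h; exact absurd (Finset.mem_univ _) h
  · rw [if_neg hνμ]
    apply Finset.sum_eq_zero
    intro σ _
    rw [if_neg, smul_zero]
    intro hcon
    exact hνμ (hkey σ hcon).2

lemma par_mono {m : ℕ} {μ : Fin n → ℕ} (h : μ ∈ Par n m) :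
    ∀ i j : Fin n, i ≤ j → μ i ≤ μ j := by
  rw [Par, Finset.mem_filter] at h
  exact h.2.1

lemma K_formula {m : ℕ} (K : (Fin n → ℕ) → (Fin n → ℕ) → ℤ) (hK : IsInvKostka n K)
    {lam μ : Fin n → ℕ} (hlam : lam ∈ Par n m) (hμ : μ ∈ Par n m) :
    K lam μ = coeff (expF n (fun i => μ i + (i : ℕ))) (msym n lam * aDet n (deltaN n)) := by
  rw [hK m lam hlam, coeff_sum]
  have hterm : ∀ ν ∈ Par n m,
      coeff (expF n (fun i => μ i + (i : ℕ))) (C (K lam ν) * aDet n (fun i => ν i + (i : ℕ)))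
        = if ν = μ then K lam ν else 0 := by
    intro ν hν
    rw [coeff_C_mul, coeff_aDet (par_mono hμ) (par_mono hν), mul_ite, mul_one, mul_zero]
  rw [Finset.sum_congr rfl hterm, Finset.sum_ite_eq' (Par n m) μ (fun ν => K lam ν), if_pos hμ]

end Stmt17Aux

namespace Stmt17Aux
variable {n : ℕ}

lemma mem_image_iff_counts {lam β : Fin n → ℕ} :
    β ∈ Finset.image (fun σ : Equiv.Perm (Fin n) => lam ∘ σ) Finset.univ ↔
      ∀ c : ℕ, (Finset.univ.filter fun i => β i = c).card
        = (Finset.univ.filter fun i => lam i = c).card := by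
  constructor
  · rintro hmem c
    obtain ⟨σ, _, rfl⟩ := Finset.mem_image.1 hmem
    refine Finset.card_equiv σ fun i => ?_
    simp only [Finset.mem_filter, Finset.mem_univ, true_and]
    rfl
  · intro h
    have hcard : ∀ c : ℕ, Fintype.card {i // β i = c} = Fintype.card {i // lam i = c} := by
      intro c
      rw [Fintype.card_subtype, Fintype.card_subtype, h c]
    let e : Fin n ≃ Fin n :=
      (Equiv.sigmaFiberEquiv β).symm.trans
        ((Equiv.sigmaCongrRight fun c => Fintype.equivOfCardEq (hcard c)).trans
          (Equiv.sigmaFiberEquiv lam))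
    refine Finset.mem_image.2 ⟨e, Finset.mem_univ _, ?_⟩
    funext i
    show lam (e i) = β i
    exact ((Fintype.equivOfCardEq (hcard (β i))) ⟨i, rfl⟩).2

lemma card_filter_val_range (lo hi : ℕ) (hhi : hi ≤ n) :
    (Finset.univ.filter fun i : Fin n => lo ≤ (i : ℕ) ∧ (i : ℕ) < hi).card = hi - lo := by
  rw [Finset.card_filter]
  rw [Fin.sum_univ_eq_sum_range (fun m => if lo ≤ m ∧ m < hi then (1:ℕ) else 0)]
  rw [← Finset.card_filter]
  have : (Finset.range n).filter (fun m => lo ≤ m ∧ m < hi) = Finset.Ico lo hi := by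
    ext m
    simp only [Finset.mem_filter, Finset.mem_range, Finset.mem_Ico]
    omega
  rw [this, Nat.card_Ico]

/-- counts with values in `{0,1,3}` are determined by the counts of 1 and 3. -/
lemma count0_eq {f : Fin n → ℕ} (hf : ∀ i, f i = 0 ∨ f i = 1 ∨ f i = 3) :
    (Finset.univ.filter fun i => f i = 0).card
      + ((Finset.univ.filter fun i => f i = 1).card
      + (Finset.univ.filter fun i => f i = 3).card) = n := by
  rw [Finset.card_filter, Finset.card_filter, Finset.card_filter, ← Finset.sum_add_distrib,
    ← Finset.sum_add_distrib]
  have : ∀ i : Fin n, ((if f i = 0 then (1:ℕ) else 0) + ((if f i = 1 then 1 else 0)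
      + (if f i = 3 then 1 else 0))) = 1 := by
    intro i
    rcases hf i with h | h | h <;> rw [h] <;> norm_num
  rw [Finset.sum_congr rfl fun i _ => this i]
  simp

lemma counts_of_vals {f g : Fin n → ℕ} (hf : ∀ i, f i = 0 ∨ f i = 1 ∨ f i = 3)
    (hg : ∀ i, g i = 0 ∨ g i = 1 ∨ g i = 3)
    (h1 : (Finset.univ.filter fun i => f i = 1).card = (Finset.univ.filter fun i => g i = 1).card)
    (h3 : (Finset.univ.filter fun i => f i = 3).card = (Finset.univ.filter fun i => g i = 3).card) :
    ∀ c : ℕ, (Finset.univ.filter fun i => f i = c).card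
      = (Finset.univ.filter fun i => g i = c).card := by
  intro c
  match c with
  | 0 =>
    have hfc := count0_eq hf
    have hgc := count0_eq hg
    omega
  | 1 => exact h1
  | 3 => exact h3
  | 2 =>
    rw [Finset.filter_eq_empty_iff.2, Finset.filter_eq_empty_iff.2]
    · intro i _; rcases hg i with h|h|h <;> omega
    · intro i _; rcases hf i with h|h|h <;> omega
  | (c+4) =>
    rw [Finset.filter_eq_empty_iff.2, Finset.filter_eq_empty_iff.2]
    · intro i _; rcases hg i with h|h|h <;> omega
    · intro i _; rcases hf i with h|h|h <;> omega

section LamCounts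
variable (n k l : ℕ)

lemma lam_val (hkl : k + l ≤ n) : ∀ i : Fin n,
    tuple3 n k 0 l i = 0 ∨ tuple3 n k 0 l i = 1 ∨ tuple3 n k 0 l i = 3 := by
  intro i
  have := i.isLt
  unfold tuple3
  split_ifs <;> omega

lemma lam_count1 (hkl : k + l ≤ n) :
    (Finset.univ.filter fun i => tuple3 n k 0 l i = 1).card = k := by
  have heq : (Finset.univ.filter fun i => tuple3 n k 0 l i = 1)
      = (Finset.univ.filter fun i : Fin n => n - k - l ≤ (i : ℕ) ∧ (i : ℕ) < n - l) := by
    apply Finset.filter_congr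
    intro i _
    have := i.isLt
    unfold tuple3
    split_ifs <;> simp <;> omega
  rw [heq, card_filter_val_range _ _ (by omega)]
  omega

lemma lam_count3 (hkl : k + l ≤ n) :
    (Finset.univ.filter fun i => tuple3 n k 0 l i = 3).card = l := by
  have heq : (Finset.univ.filter fun i => tuple3 n k 0 l i = 3)
      = (Finset.univ.filter fun i : Fin n => n - l ≤ (i : ℕ) ∧ (i : ℕ) < n) := by
    apply Finset.filter_congr
    intro i _
    have := i.isLt
    unfold tuple3
    split_ifs <;> simp <;> omega
  rw [heq, card_filter_val_range _ _ (by omega)]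
  omega

end LamCounts

end Stmt17Aux

namespace Stmt17Aux
variable {n : ℕ}

def klF (k l : ℕ) : Fin 2 →₀ ℕ := Finsupp.single 0 k + Finsupp.single 1 l

lemma coeff_xy (c1 c3 k l : ℕ) :
    coeff (klF k l) (px ^ c1 * py ^ c3) = if c1 = k ∧ c3 = l then 1 else 0 := by
  unfold px py
  rw [X_pow_eq_monomial, X_pow_eq_monomial, monomial_mul, one_mul, coeff_monomial]
  congr 1
  rw [eq_iff_iff]
  constructor
  · intro h
    have h0 := DFunLike.congr_fun h (0 : Fin 2)
    have h1 := DFunLike.congr_fun h (1 : Fin 2)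
    unfold klF at h0 h1
    simp only [Finsupp.add_apply, Finsupp.single_apply] at h0 h1
    norm_num at h0 h1
    exact ⟨h0, h1⟩
  · rintro ⟨rfl, rfl⟩
    rfl

lemma expF_add_fun (f g : Fin n → ℕ) :
    expF n (fun i => f i + g i) = expF n f + expF n g := by
  ext i
  simp [expF, Finsupp.add_apply]

lemma perm_term (k l : ℕ) (hkl : k + l ≤ n) (v : Fin n → ℕ) (σ : Equiv.Perm (Fin n)) :
    (∑ β ∈ Finset.univ.image (fun τ : Equiv.Perm (Fin n) => tuple3 n k 0 l ∘ τ),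
       if expF n (fun i => β i + ((σ i) : ℕ)) = expF n v then (1:ℤ) else 0)
     = coeff (klF k l) (∏ i, phi (v i) ((σ i) : ℕ)) := by
  by_cases H : ∀ i, v i = (σ i : ℕ) ∨ v i = (σ i : ℕ) + 1 ∨ v i = (σ i : ℕ) + 3
  · set e1 : Fin n → ℕ := fun i => if v i = (σ i : ℕ) + 1 then 1 else 0 with he1
    set e3 : Fin n → ℕ := fun i => if v i = (σ i : ℕ) + 3 then 1 else 0 with he3
    have hphi : ∀ i : Fin n, phi (v i) ((σ i) : ℕ) = px ^ e1 i * py ^ e3 i := by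
      intro i
      have h := H i
      simp only [he1, he3]
      unfold phi
      split_ifs <;> first | (exfalso; omega) | norm_num
    rw [Finset.prod_congr rfl (fun i _ => hphi i), Finset.prod_mul_distrib,
      Finset.prod_pow_eq_pow_sum, Finset.prod_pow_eq_pow_sum, coeff_xy]
    set β0 : Fin n → ℕ := fun i => e1 i + 3 * e3 i with hβ0def
    have hβ0 : ∀ i, β0 i + ((σ i) : ℕ) = v i := by
      intro i
      have h := H i
      simp only [hβ0def, he1, he3]
      split_ifs <;> omega
    have hite : ∀ β : Fin n → ℕ,
        (if expF n (fun i => β i + ((σ i):ℕ)) = expF n v then (1:ℤ) else 0)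
          = if β = β0 then 1 else 0 := by
      intro β
      refine if_congr ?_ rfl rfl
      constructor
      · intro h
        funext i
        have h2 := congrFun (expF_inj h) i
        have h3 := hβ0 i
        omega
      · rintro rfl
        congr 1
        funext i
        exact hβ0 i
    rw [Finset.sum_congr rfl fun β _ => hite β,
      Finset.sum_ite_eq' _ β0 (fun _ => (1:ℤ))]
    have hβ0val : ∀ i, β0 i = 0 ∨ β0 i = 1 ∨ β0 i = 3 := by
      intro i
      simp only [hβ0def, he1, he3]
      split_ifs <;> omega
    have hc1 : (Finset.univ.filter fun i => β0 i = 1).card = ∑ i, e1 i := by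
      rw [Finset.card_filter]
      refine Finset.sum_congr rfl fun i _ => ?_
      simp only [hβ0def, he1, he3]
      split_ifs <;> omega
    have hc3 : (Finset.univ.filter fun i => β0 i = 3).card = ∑ i, e3 i := by
      rw [Finset.card_filter]
      refine Finset.sum_congr rfl fun i _ => ?_
      simp only [hβ0def, he1, he3]
      split_ifs <;> omega
    by_cases hmem : β0 ∈ Finset.univ.image (fun τ : Equiv.Perm (Fin n) => tuple3 n k 0 l ∘ τ)
    · rw [if_pos hmem, if_pos]
      have hcounts := mem_image_iff_counts.1 hmem
      have h1 := hcounts 1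
      have h3 := hcounts 3
      rw [hc1] at h1
      rw [hc3] at h3
      rw [lam_count1 n k l hkl] at h1
      rw [lam_count3 n k l hkl] at h3
      exact ⟨h1.symm ▸ rfl, h3.symm ▸ rfl⟩
    · rw [if_neg hmem, if_neg]
      intro ⟨hk, hl⟩
      apply hmem
      apply mem_image_iff_counts.2
      apply counts_of_vals hβ0val (lam_val n k l hkl)
      · rw [hc1, lam_count1 n k l hkl, hk]
      · rw [hc3, lam_count3 n k l hkl, hl]
  · push_neg at H
    obtain ⟨i0, h1, h2, h3⟩ := H
    have hzero : phi (v i0) ((σ i0) : ℕ) = 0 := by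
      unfold phi
      rw [if_neg h1, if_neg h2, if_neg h3]
    rw [Finset.prod_eq_zero (Finset.mem_univ i0) hzero, coeff_zero]
    apply Finset.sum_eq_zero
    intro β hβ
    rw [if_neg]
    intro hcon
    obtain ⟨τ, _, rfl⟩ := Finset.mem_image.1 hβ
    have h4 := congrFun (expF_inj hcon) i0
    simp only [Function.comp_apply] at h4
    have h5 := lam_val n k l hkl (τ i0)
    omega

end Stmt17Aux

namespace Stmt17Aux
variable {n : ℕ}

lemma bridge (k l : ℕ) (hkl : k + l ≤ n) (v : Fin n → ℕ) :
    coeff (expF n v) (msym n (tuple3 n k 0 l) * aDet n (deltaN n))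
      = coeff (klF k l) (Cmat n v).det := by
  have hβterm : ∀ β : Fin n → ℕ,
      coeff (expF n v) (xpow n β * aDet n (deltaN n))
        = ∑ σ : Equiv.Perm (Fin n), Equiv.Perm.sign σ •
            (if expF n (fun i => β i + ((σ i) : ℕ)) = expF n v then (1:ℤ) else 0) := by
    intro β
    rw [aDet_expand, Finset.mul_sum, coeff_sum]
    refine Finset.sum_congr rfl fun σ _ => ?_
    rw [mul_smul_comm, coeff_smul, xpow_eq, monomial_mul, one_mul, ← expF_add_fun,
      coeff_monomial]
    rfl
  calc coeff (expF n v) (msym n (tuple3 n k 0 l) * aDet n (deltaN n))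
      = ∑ β ∈ Finset.univ.image (fun τ : Equiv.Perm (Fin n) => tuple3 n k 0 l ∘ τ),
          ∑ σ : Equiv.Perm (Fin n), Equiv.Perm.sign σ •
            (if expF n (fun i => β i + ((σ i) : ℕ)) = expF n v then (1:ℤ) else 0) := by
        rw [msym, Finset.sum_mul, coeff_sum]
        exact Finset.sum_congr rfl fun β _ => hβterm β
    _ = ∑ σ : Equiv.Perm (Fin n),
          ∑ β ∈ Finset.univ.image (fun τ : Equiv.Perm (Fin n) => tuple3 n k 0 l ∘ τ),
            Equiv.Perm.sign σ •
            (if expF n (fun i => β i + ((σ i) : ℕ)) = expF n v then (1:ℤ) else 0) :=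
        Finset.sum_comm
    _ = ∑ σ : Equiv.Perm (Fin n), Equiv.Perm.sign σ •
          (∑ β ∈ Finset.univ.image (fun τ : Equiv.Perm (Fin n) => tuple3 n k 0 l ∘ τ),
            if expF n (fun i => β i + ((σ i) : ℕ)) = expF n v then (1:ℤ) else 0) :=
        Finset.sum_congr rfl fun σ _ => (Finset.smul_sum).symm
    _ = ∑ σ : Equiv.Perm (Fin n), Equiv.Perm.sign σ •
          coeff (klF k l) (∏ i, phi (v i) ((σ i) : ℕ)) :=
        Finset.sum_congr rfl fun σ _ => congrArg _ (perm_term k l hkl v σ)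
    _ = coeff (klF k l) (Cmat n v).det := by
        rw [← Matrix.det_transpose, Matrix.det_apply, coeff_sum]
        refine (Finset.sum_congr rfl fun σ _ => ?_).symm
        rw [coeff_smul]
        congr 1

lemma tuple3_mem_Par (a b c m : ℕ) (h1 : a + b + c ≤ n) (h2 : a + 2*b + 3*c = m)
    (h3 : ∀ i : Fin n, tuple3 n a b c i ≤ m) : tuple3 n a b c ∈ Par n m := by
  rw [Par, Finset.mem_filter]
  refine ⟨?_, ?_, ?_⟩
  · rw [Fintype.mem_piFinset]
    intro i
    rw [Finset.mem_range]
    have := h3 i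
    omega
  · intro i j hij
    have hij' : (i : ℕ) ≤ (j : ℕ) := hij
    unfold tuple3
    split_ifs <;> omega
  · have hval : ∀ i : Fin n, tuple3 n a b c i
        = ((if n - a - b - c ≤ (i:ℕ) then 1 else 0)
          + ((if n - b - c ≤ (i:ℕ) then 1 else 0) + (if n - c ≤ (i:ℕ) then 1 else 0))) := by
      intro i
      have := i.isLt
      unfold tuple3
      split_ifs <;> omega
    rw [Finset.sum_congr rfl fun i _ => hval i, Finset.sum_add_distrib, Finset.sum_add_distrib]
    have hcnt : ∀ t : ℕ, t ≤ n → (∑ i : Fin n, if t ≤ (i:ℕ) then (1:ℕ) else 0) = n - t := by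
      intro t ht
      have hh : (∑ i : Fin n, if t ≤ (i:ℕ) then (1:ℕ) else 0)
          = (Finset.univ.filter fun i : Fin n => t ≤ (i:ℕ) ∧ (i:ℕ) < n).card := by
        rw [Finset.card_filter]
        refine Finset.sum_congr rfl fun i _ => ?_
        have := i.isLt
        split_ifs <;> omega
      rw [hh, card_filter_val_range t n (le_refl n)]
    rw [hcnt _ (by omega), hcnt _ (by omega), hcnt _ (by omega)]
    omega

lemma coeff_py_mul (k l : ℕ) (hl : 1 ≤ l) (P : R2) :
    coeff (klF k l) (py * P) = coeff (klF k (l-1)) P := by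
  have hsplit : klF k l = Finsupp.single 1 1 + klF k (l-1) := by
    unfold klF
    rw [show l = 1 + (l - 1) from by omega, Finsupp.single_add]
    rw [show 1 + (l-1) - 1 = l - 1 from by omega]
    exact add_left_comm _ _ _
  rw [hsplit]
  unfold py
  exact coeff_X_mul _ 1 P

end Stmt17Aux


open Stmt17Aux

/-- The recurrence `K⁻¹_{(1^k,3^l),(1^a,2^b)} = -K⁻¹_{(1^k,3^{l-1}),(1^{a-1},2^{b-1})}
- K⁻¹_{(1^k,3^{l-1}),(1^{a+1},2^{b-2})}` for `l ≥ 1`, `a ≥ 1`, `b ≥ 2`. -/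
theorem stmt17 (n k l a b : ℕ) (hl : 1 ≤ l) (ha : 1 ≤ a) (hb : 2 ≤ b)
    (hw : k + 3 * l = a + 2 * b) (hn : k + 3 * l ≤ n)
    (K : (Fin n → ℕ) → (Fin n → ℕ) → ℤ) (hK : IsInvKostka n K) :
    K (tuple3 n k 0 l) (tuple3 n a b 0)
      = -K (tuple3 n k 0 (l - 1)) (tuple3 n (a - 1) (b - 1) 0)
        - K (tuple3 n k 0 (l - 1)) (tuple3 n (a + 1) (b - 2) 0) := by
  have hkl : k + l ≤ n := by omega
  have hkl' : k + (l - 1) ≤ n := by omega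
  set z := n - a - b with hz
  -- memberships
  have hlam : tuple3 n k 0 l ∈ Par n (k + 3 * l) :=
    tuple3_mem_Par k 0 l _ (by omega) (by omega)
      (fun i => by have := i.isLt; unfold tuple3; split_ifs <;> omega)
  have hlam' : tuple3 n k 0 (l - 1) ∈ Par n (k + 3 * (l - 1)) :=
    tuple3_mem_Par k 0 (l - 1) _ (by omega) (by omega)
      (fun i => by have := i.isLt; unfold tuple3; split_ifs <;> omega)
  have hmu1 : tuple3 n a b 0 ∈ Par n (k + 3 * l) :=
    tuple3_mem_Par a b 0 _ (by omega) (by omega)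
      (fun i => by have := i.isLt; unfold tuple3; split_ifs <;> omega)
  have hmu2 : tuple3 n (a - 1) (b - 1) 0 ∈ Par n (k + 3 * (l - 1)) :=
    tuple3_mem_Par (a - 1) (b - 1) 0 _ (by omega) (by omega)
      (fun i => by have := i.isLt; unfold tuple3; split_ifs <;> omega)
  have hmu3 : tuple3 n (a + 1) (b - 2) 0 ∈ Par n (k + 3 * (l - 1)) :=
    tuple3_mem_Par (a + 1) (b - 2) 0 _ (by omega) (by omega)
      (fun i => by have := i.isLt; unfold tuple3; split_ifs <;> omega)
  -- K values as coefficients of determinants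
  have e1 : K (tuple3 n k 0 l) (tuple3 n a b 0)
      = coeff (klF k l) (Cmat n (fun i => tuple3 n a b 0 i + (i : ℕ))).det := by
    rw [K_formula K hK hlam hmu1, bridge k l hkl]
  have e2 : K (tuple3 n k 0 (l - 1)) (tuple3 n (a - 1) (b - 1) 0)
      = coeff (klF k (l - 1)) (Cmat n (fun i => tuple3 n (a - 1) (b - 1) 0 i + (i : ℕ))).det := by
    rw [K_formula K hK hlam' hmu2, bridge k (l - 1) hkl']
  have e3 : K (tuple3 n k 0 (l - 1)) (tuple3 n (a + 1) (b - 2) 0)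
      = coeff (klF k (l - 1)) (Cmat n (fun i => tuple3 n (a + 1) (b - 2) 0 i + (i : ℕ))).det := by
    rw [K_formula K hK hlam' hmu3, bridge k (l - 1) hkl']
  -- identify the row functions with `rho`
  have hv1 : (fun i : Fin n => tuple3 n a b 0 i + (i : ℕ))
      = fun i : Fin n => rho z (z + a + 1) (i : ℕ) := by
    funext i
    have := i.isLt
    unfold tuple3 rho
    split_ifs <;> omega
  have hv2 : (fun i : Fin n => tuple3 n (a - 1) (b - 1) 0 i + (i : ℕ))
      = fun i : Fin n => rho (z + 2) (z + a + 2) (i : ℕ) := by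
    funext i
    have := i.isLt
    unfold tuple3 rho
    split_ifs <;> omega
  have hv3 : (fun i : Fin n => tuple3 n (a + 1) (b - 2) 0 i + (i : ℕ))
      = fun i : Fin n => rho (z + 1) (z + a + 3) (i : ℕ) := by
    funext i
    have := i.isLt
    unfold tuple3 rho
    split_ifs <;> omega
  have hdet := det_identity n z a b ha hb (by omega)
  have hA : (Cmat n (fun i : Fin n => rho z (z + a + 1) (i : ℕ))).det
      = -(py * (Cmat n (fun i : Fin n => rho (z + 2) (z + a + 2) (i : ℕ))).det)
        - py * (Cmat n (fun i : Fin n => rho (z + 1) (z + a + 3) (i : ℕ))).det := by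
    linear_combination hdet
  rw [e1, e2, e3, hv1, hv2, hv3, hA]
  rw [coeff_sub, coeff_neg, coeff_py_mul k l hl, coeff_py_mul k l hl]
end
end

section
/- For b ≥ 0 define the polynomial h_b(t) = Σ K^{-1}_{(1^k,3^l),(2^b)} t^k ∈ ℤ[t], where the sum is over all k, l ≥ 0 with k+3l = 2b and (2^b) is the partition with b parts equal to 2. Then for every b ≥ 3 one has h_b(t) = −t·h_{b−2}(t) + h_{b−3}(t). -/
open Finset MvPolynomial

/-- `h_b(t) = Σ_{k+3l=2b} K⁻¹_{(1^k,3^l),(2^b)} t^k`. -/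
noncomputable def hpoly (n : ℕ) (K : (Fin n → ℕ) → (Fin n → ℕ) → ℤ) (b : ℕ) :
    Polynomial ℤ :=
  ∑ l ∈ Finset.range (2 * b / 3 + 1),
    Polynomial.C (K (tuple3 n (2 * b - 3 * l) 0 l) (tuple3 n 0 b 0)) *
      Polynomial.X ^ (2 * b - 3 * l)


/-! ### Auxiliary machinery -/

noncomputable section Aux19

abbrev Rt := Polynomial ℤ

variable {n : ℕ}

/-- finsupp from a function on `Fin n`. -/
def fs (γ : Fin n → ℕ) : Fin n →₀ ℕ := Finsupp.equivFunOnFinite.symm γ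

@[simp] lemma fs_apply (γ : Fin n → ℕ) (j : Fin n) : fs γ j = γ j := rfl

lemma fs_eq_iff {γ γ' : Fin n → ℕ} : fs γ = fs γ' ↔ γ = γ' :=
  (Finsupp.equivFunOnFinite.symm.injective).eq_iff

lemma sum3 {M : Type*} [AddCommMonoid M] (i : ℕ) (f : ℕ → M) :
    ∑ d ∈ ({i, i + 1, i + 3} : Finset ℕ), f d = f i + f (i + 1) + f (i + 3) := by
  rw [show ({i, i+1, i+3} : Finset ℕ) = insert i (insert (i+1) {i+3}) from rfl]
  rw [Finset.sum_insert (by simp), Finset.sum_insert (by simp),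
    Finset.sum_singleton, add_assoc]

lemma xpow_monomial {A : Type*} [CommSemiring A] (x : Fin n → ℕ) :
    (∏ j, (X j : MvPolynomial (Fin n) A) ^ x j) = monomial (fs x) 1 := by
  rw [← prod_X_pow_eq_monomial]
  refine (Finset.prod_subset (Finset.subset_univ _) ?_).symm
  intro j _ hj
  have : x j = 0 := by
    by_contra h
    exact hj (Finsupp.mem_support_iff.2 (by simpa using h))
  simp [this]

lemma coeff_prod_single (D : Fin n → Finset ℕ) (c : Fin n → ℕ → Rt) (γ : Fin n → ℕ) :
    coeff (fs γ) (∏ j, ∑ d ∈ D j, (C (c j d) * X j ^ d : MvPolynomial (Fin n) Rt)) =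
      ∏ j, ∑ d ∈ D j, if γ j = d then c j d else 0 := by
  classical
  rw [Finset.prod_univ_sum, Finset.prod_univ_sum]
  rw [MvPolynomial.coeff_sum]
  refine Finset.sum_congr rfl fun x hx => ?_
  have hterm : (∏ j, (C (c j (x j)) * X j ^ x j : MvPolynomial (Fin n) Rt)) =
      C (∏ j, c j (x j)) * monomial (fs x) 1 := by
    rw [Finset.prod_mul_distrib, map_prod, xpow_monomial]
  rw [hterm, MvPolynomial.coeff_C_mul, MvPolynomial.coeff_monomial]
  by_cases hxg : x = γ
  · subst hxg
    simp
  · rw [if_neg (by simpa [fs_eq_iff] using hxg), mul_zero]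
    obtain ⟨j0, hj0⟩ : ∃ j0, x j0 ≠ γ j0 := by
      by_contra h
      push_neg at h
      exact hxg (funext h)
    refine (Finset.prod_eq_zero (Finset.mem_univ j0) ?_).symm
    rw [if_neg (fun h => hj0 h.symm)]

lemma coeff_det_single (D : Fin n → Finset ℕ) (c : Fin n → ℕ → Rt) (γ : Fin n → ℕ) :
    coeff (fs γ) (Matrix.det (Matrix.of fun i j =>
        ∑ d ∈ D i, (C (c i d) * X j ^ d : MvPolynomial (Fin n) Rt))) =
      Matrix.det (Matrix.of fun i j => ∑ d ∈ D i, if γ j = d then c i d else 0) := by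
  classical
  rw [Matrix.det_apply, Matrix.det_apply, MvPolynomial.coeff_sum]
  refine Finset.sum_congr rfl fun σ _ => ?_
  rw [Units.smul_def, Units.smul_def, MvPolynomial.coeff_smul]
  congr 1
  exact coeff_prod_single (fun j => D (σ j)) (fun j => c (σ j)) γ

lemma perm_eq_one_of_strictMono (σ : Equiv.Perm (Fin n)) (h : StrictMono σ) : σ = 1 := by
  have key : ∀ i : Fin n, i ≤ σ i := by
    intro i
    induction' hm : (i : ℕ) using Nat.strong_induction_on with m ih generalizing i
    subst hm
    by_contra hc
    push_neg at hc
    have h1 : σ i < i := hc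
    have h2 : σ i ≤ σ (σ i) := ih (σ i) (by exact_mod_cast h1) (σ i) rfl
    have h3 : σ (σ i) < σ i := h h1
    exact absurd (lt_of_le_of_lt h2 h3) (lt_irrefl _)
  -- sums force equality
  have hsum : ∑ i : Fin n, ((σ i : ℕ)) = ∑ i : Fin n, (i : ℕ) := Equiv.sum_comp σ _
  have hall : ∀ i : Fin n, σ i = i := by
    by_contra hc
    push_neg at hc
    obtain ⟨i0, hi0⟩ := hc
    have hlt : (i0 : ℕ) < (σ i0 : ℕ) := by
      rcases lt_or_eq_of_le (key i0) with h' | h'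
      · exact_mod_cast h'
      · exact absurd h'.symm hi0
    have : ∑ i : Fin n, (i : ℕ) < ∑ i : Fin n, ((σ i : ℕ)) :=
      Finset.sum_lt_sum (fun i _ => by exact_mod_cast key i) ⟨i0, Finset.mem_univ _, hlt⟩
    omega
  exact Equiv.ext hall

lemma coeff_aDet (α γ : Fin n → ℕ) (hα : StrictMono α) (hγ : StrictMono γ) :
    coeff (fs γ) (aDet n α) = if γ = α then 1 else 0 := by
  classical
  rw [aDet, Matrix.det_apply, MvPolynomial.coeff_sum]
  have hterm : ∀ σ : Equiv.Perm (Fin n),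
      coeff (fs γ) ((Equiv.Perm.sign σ) • ∏ i, (Matrix.of fun i j : Fin n =>
        (X j : MvPolynomial (Fin n) ℤ) ^ α i) (σ i) i) =
      (Equiv.Perm.sign σ : ℤ) * (if α ∘ σ = γ then 1 else 0) := by
    intro σ
    rw [Units.smul_def, MvPolynomial.coeff_smul]
    have : (∏ i, (Matrix.of fun i j : Fin n => (X j : MvPolynomial (Fin n) ℤ) ^ α i) (σ i) i)
        = monomial (fs (α ∘ σ)) 1 := by
      rw [← xpow_monomial]
      rfl
    rw [this, MvPolynomial.coeff_monomial]
    simp only [fs_eq_iff, smul_eq_mul]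
  simp only [hterm]
  by_cases hga : γ = α
  · subst hga
    rw [if_pos rfl]
    rw [Finset.sum_eq_single (1 : Equiv.Perm (Fin n))]
    · simp
    · intro σ _ hσ
      have : ¬ (γ ∘ σ = γ) := by
        intro h
        apply hσ
        refine Equiv.ext fun i => ?_
        exact hγ.injective (congrFun h i)
      rw [if_neg this, mul_zero]
    · intro h
      exact absurd (Finset.mem_univ _) h
  · rw [if_neg hga]
    refine Finset.sum_eq_zero fun σ _ => ?_
    have : ¬ (α ∘ σ = γ) := by
      intro h
      have hσmono : StrictMono σ := by
        intro i j hij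
        have : α (σ i) < α (σ j) := by
          rw [show α (σ i) = γ i from congrFun h i, show α (σ j) = γ j from congrFun h j]
          exact hγ hij
        exact (hα.lt_iff_lt).1 this
      rw [perm_eq_one_of_strictMono σ hσmono] at h
      exact hga (by simpa using h.symm)
    rw [if_neg this, mul_zero]
/-- number of coordinates with value `v`. -/
def cnt (v : ℕ) (β : Fin n → ℕ) : ℕ := (Finset.univ.filter fun j => β j = v).card

lemma cnt_comp_perm (f : Fin n → ℕ) (σ : Equiv.Perm (Fin n)) (v : ℕ) :
    cnt v (f ∘ σ) = cnt v f := by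
  classical
  unfold cnt
  refine Finset.card_bij (fun j _ => σ j) (fun j hj => ?_) (fun a ha b hb h => σ.injective h)
    (fun j hj => ⟨σ.symm j, ?_, by simp⟩)
  · simp only [Finset.mem_filter, Finset.mem_univ, true_and] at hj ⊢
    exact hj
  · simp only [Finset.mem_filter, Finset.mem_univ, true_and] at hj ⊢
    simpa using hj

lemma exists_perm_comp {f g : Fin n → ℕ} (h : ∀ v, cnt v f = cnt v g) :
    ∃ σ : Equiv.Perm (Fin n), f ∘ σ = g := by
  classical
  have e : ∀ v : ℕ, { x : Fin n // g x = v } ≃ { x : Fin n // f x = v } := by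
    intro v
    apply Fintype.equivOfCardEq
    rw [Fintype.card_subtype, Fintype.card_subtype]
    exact (h v).symm
  refine ⟨(Equiv.sigmaFiberEquiv g).symm.trans ((Equiv.sigmaCongrRight e).trans
    (Equiv.sigmaFiberEquiv f)), funext fun j => ?_⟩
  simp only [Function.comp_apply, Equiv.trans_apply]
  have h1 : (Equiv.sigmaFiberEquiv g).symm j = ⟨g j, j, rfl⟩ := rfl
  rw [h1]
  have h2 : (Equiv.sigmaCongrRight e) ⟨g j, ⟨j, rfl⟩⟩ = ⟨g j, e (g j) ⟨j, rfl⟩⟩ := rfl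
  rw [h2]
  exact ((e (g j)) ⟨j, rfl⟩).2

/-- values in {0,1,3} determine the sum from the counts. -/
lemma sum_eq_cnt {β : Fin n → ℕ} (hβ : ∀ j, β j = 0 ∨ β j = 1 ∨ β j = 3) :
    ∑ j, β j = cnt 1 β + 3 * cnt 3 β := by
  classical
  rw [← Finset.sum_filter_add_sum_filter_not Finset.univ (fun j => β j = 1)]
  have h1 : ∑ j ∈ Finset.univ.filter (fun j => β j = 1), β j = cnt 1 β := by
    rw [Finset.sum_congr rfl (fun j hj => (Finset.mem_filter.1 hj).2)]
    simp [cnt]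
  rw [h1]
  congr 1
  rw [← Finset.sum_filter_add_sum_filter_not (Finset.univ.filter (fun j => ¬ β j = 1))
    (fun j => β j = 3)]
  have h2 : ∑ j ∈ (Finset.univ.filter (fun j => ¬ β j = 1)).filter (fun j => β j = 3), β j
      = 3 * cnt 3 β := by
    rw [Finset.filter_filter]
    have : (Finset.univ.filter fun j => ¬ β j = 1 ∧ β j = 3)
        = Finset.univ.filter fun j => β j = 3 := by
      refine Finset.filter_congr fun j _ => ?_
      constructor
      · exact fun h => h.2
      · intro h; exact ⟨by omega, h⟩
    rw [this]
    rw [Finset.sum_congr rfl (fun j hj => (Finset.mem_filter.1 hj).2)]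
    rw [Finset.sum_congr rfl (fun j hj => rfl), Finset.sum_const, smul_eq_mul]
    rw [mul_comm]
    rfl
  have h3 : ∑ j ∈ (Finset.univ.filter (fun j => ¬ β j = 1)).filter (fun j => ¬ β j = 3), β j
      = 0 := by
    refine Finset.sum_eq_zero fun j hj => ?_
    simp only [Finset.mem_filter] at hj
    rcases hβ j with h | h | h <;> omega
  rw [h2, h3, add_zero]

/-- total count: everything with values in {0,1,3}. -/
lemma cnt_total {β : Fin n → ℕ} (hβ : ∀ j, β j = 0 ∨ β j = 1 ∨ β j = 3) :
    cnt 0 β + cnt 1 β + cnt 3 β = n := by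
  classical
  have h01 : (Finset.univ.filter fun j => β j = 0) ∪ (Finset.univ.filter fun j => β j = 1)
      ∪ (Finset.univ.filter fun j => β j = 3) = Finset.univ := by
    refine Finset.eq_univ_of_forall fun j => ?_
    simp only [Finset.mem_union, Finset.mem_filter, Finset.mem_univ, true_and]
    rcases hβ j with h | h | h <;> tauto
  have hd1 : Disjoint (Finset.univ.filter fun j => β j = 0)
      (Finset.univ.filter fun j => β j = 1) := by
    refine Finset.disjoint_left.2 fun j hj hj' => ?_
    simp only [Finset.mem_filter] at hj hj'
    omega
  have hd2 : Disjoint ((Finset.univ.filter fun j => β j = 0)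
      ∪ (Finset.univ.filter fun j => β j = 1)) (Finset.univ.filter fun j => β j = 3) := by
    refine Finset.disjoint_left.2 fun j hj hj' => ?_
    simp only [Finset.mem_union, Finset.mem_filter] at hj hj'
    omega
  calc cnt 0 β + cnt 1 β + cnt 3 β
      = ((Finset.univ.filter fun j => β j = 0) ∪ (Finset.univ.filter fun j => β j = 1)).card
        + cnt 3 β := by rw [Finset.card_union_of_disjoint hd1]; rfl
    _ = (((Finset.univ.filter fun j => β j = 0) ∪ (Finset.univ.filter fun j => β j = 1))
        ∪ (Finset.univ.filter fun j => β j = 3)).card := by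
          rw [Finset.card_union_of_disjoint hd2]; rfl
    _ = (Finset.univ : Finset (Fin n)).card := by rw [h01]
    _ = n := by simp

lemma card_filter_ico (a c : ℕ) (hc : c ≤ n) :
    (Finset.univ.filter fun j : Fin n => a ≤ (j : ℕ) ∧ (j : ℕ) < c).card = c - a := by
  classical
  rw [show c - a = (Finset.Ico a c).card from (Nat.card_Ico a c).symm]
  refine Finset.card_bij' (fun j _ => (j : ℕ)) (fun m hm => ⟨m, ?_⟩) ?_ ?_ ?_ ?_
  · have := Finset.mem_Ico.1 hm
    omega
  · intro j hj
    simp only [Finset.mem_filter] at hj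
    exact Finset.mem_Ico.2 hj.2
  · intro m hm
    simp only [Finset.mem_filter, Finset.mem_univ, true_and]
    have := Finset.mem_Ico.1 hm
    constructor <;> simp [this.1, this.2]
  · intro j hj; rfl
  · intro m hm; rfl

lemma tuple3_apply (k l : ℕ) (j : Fin n) :
    tuple3 n k 0 l j = if (j : ℕ) < n - k - l then 0
      else if (j : ℕ) < n - l then 1 else 3 := by
  unfold tuple3
  split_ifs <;> omega

lemma tuple3_mem (k l : ℕ) (j : Fin n) :
    tuple3 n k 0 l j = 0 ∨ tuple3 n k 0 l j = 1 ∨ tuple3 n k 0 l j = 3 := by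
  rw [tuple3_apply]
  split_ifs <;> simp

lemma cnt_tuple3_one (k l : ℕ) (h : k + l ≤ n) : cnt 1 (tuple3 n k 0 l) = k := by
  unfold cnt
  rw [show (Finset.univ.filter fun j : Fin n => tuple3 n k 0 l j = 1)
      = Finset.univ.filter fun j : Fin n => n - k - l ≤ (j : ℕ) ∧ (j : ℕ) < n - l by
    refine Finset.filter_congr fun j _ => ?_
    rw [tuple3_apply]
    split_ifs <;> simp <;> omega]
  rw [card_filter_ico _ _ (by omega)]
  omega

lemma cnt_tuple3_three (k l : ℕ) (h : k + l ≤ n) : cnt 3 (tuple3 n k 0 l) = l := by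
  unfold cnt
  rw [show (Finset.univ.filter fun j : Fin n => tuple3 n k 0 l j = 3)
      = Finset.univ.filter fun j : Fin n => n - l ≤ (j : ℕ) ∧ (j : ℕ) < n by
    refine Finset.filter_congr fun j _ => ?_
    rw [tuple3_apply]
    have := j.isLt
    split_ifs <;> simp <;> omega]
  rw [card_filter_ico _ _ (le_refl n)]
  omega

lemma cnt_tuple3_zero (k l : ℕ) (h : k + l ≤ n) : cnt 0 (tuple3 n k 0 l) = n - k - l := by
  unfold cnt
  rw [show (Finset.univ.filter fun j : Fin n => tuple3 n k 0 l j = 0)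
      = Finset.univ.filter fun j : Fin n => 0 ≤ (j : ℕ) ∧ (j : ℕ) < n - k - l by
    refine Finset.filter_congr fun j _ => ?_
    rw [tuple3_apply]
    split_ifs <;> simp <;> omega]
  rw [card_filter_ico _ _ (by omega)]
  omega

lemma cnt_tuple3_other (k l v : ℕ) (hv : v ≠ 0 ∧ v ≠ 1 ∧ v ≠ 3) :
    cnt v (tuple3 n k 0 l) = 0 := by
  unfold cnt
  rw [Finset.card_eq_zero, Finset.filter_eq_empty_iff]
  intro j _
  rw [tuple3_apply]
  split_ifs <;> omega

lemma tuple3_monotone (a b c : ℕ) : ∀ i j : Fin n, i ≤ j → tuple3 n a b c i ≤ tuple3 n a b c j := by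
  intro i j hij
  have : (i : ℕ) ≤ (j : ℕ) := hij
  unfold tuple3
  split_ifs <;> omega

lemma tuple3_sum' (k l : ℕ) (h : k + l ≤ n) : ∑ j, tuple3 n k 0 l j = k + 3 * l := by
  rw [sum_eq_cnt (tuple3_mem k l), cnt_tuple3_one k l h, cnt_tuple3_three k l h]

lemma tuple3_mem_Par (k l : ℕ) (h : k + l ≤ n) : tuple3 n k 0 l ∈ Par n (k + 3 * l) := by
  rw [Par, Finset.mem_filter]
  refine ⟨?_, tuple3_monotone _ _ _, tuple3_sum' k l h⟩
  rw [Fintype.mem_piFinset]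
  intro j
  rw [Finset.mem_range]
  have happ := tuple3_apply (n := n) k l j
  have hjn := j.isLt
  rcases tuple3_mem (n := n) k l j with h' | h' | h' <;> rw [h'] <;> rw [h'] at happ <;>
    split_ifs at happ <;> omega

lemma tuple3_b_apply (b : ℕ) (hb : b ≤ n) (j : Fin n) :
    tuple3 n 0 b 0 j = if (j : ℕ) < n - b then 0 else 2 := by
  unfold tuple3
  have := j.isLt
  split_ifs <;> omega

lemma tuple3_b_sum (b : ℕ) (hb : b ≤ n) : ∑ j, tuple3 n 0 b 0 j = 2 * b := by
  rw [Finset.sum_congr rfl fun j _ => tuple3_b_apply b hb j]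
  rw [← Finset.sum_filter_add_sum_filter_not Finset.univ (fun j : Fin n => (j : ℕ) < n - b)]
  have h1 : ∑ j ∈ Finset.univ.filter (fun j : Fin n => (j : ℕ) < n - b),
      (if (j : ℕ) < n - b then 0 else 2) = 0 := by
    refine Finset.sum_eq_zero fun j hj => ?_
    rw [if_pos (Finset.mem_filter.1 hj).2]
  have h2 : ∑ j ∈ Finset.univ.filter (fun j : Fin n => ¬ (j : ℕ) < n - b),
      (if (j : ℕ) < n - b then 0 else 2) = 2 * b := by
    rw [Finset.sum_congr rfl (fun j hj => if_neg (Finset.mem_filter.1 hj).2)]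
    rw [Finset.sum_const, smul_eq_mul]
    rw [show (Finset.univ.filter fun j : Fin n => ¬ (j : ℕ) < n - b)
        = Finset.univ.filter fun j : Fin n => n - b ≤ (j : ℕ) ∧ (j : ℕ) < n by
      refine Finset.filter_congr fun j _ => ?_
      have := j.isLt
      constructor
      · intro hj; omega
      · intro hj; omega]
    rw [card_filter_ico _ _ (le_refl n)]
    omega
  rw [h1, h2, zero_add]

lemma tuple3_b_mem_Par (b : ℕ) (hb : b ≤ n) : tuple3 n 0 b 0 ∈ Par n (2 * b) := by
  rw [Par, Finset.mem_filter]
  refine ⟨?_, tuple3_monotone _ _ _, tuple3_b_sum b hb⟩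
  rw [Fintype.mem_piFinset]
  intro j
  rw [Finset.mem_range, tuple3_b_apply b hb j]
  have hjn := j.isLt
  split_ifs with h'
  · omega
  · omega

lemma strictMono_add_val {μ : Fin n → ℕ} (hμ : ∀ i j : Fin n, i ≤ j → μ i ≤ μ j) :
    StrictMono fun i : Fin n => μ i + (i : ℕ) := by
  intro i j hij
  show μ i + (i : ℕ) < μ j + (j : ℕ)
  have h1 := hμ i j (le_of_lt hij)
  have h2 : (i : ℕ) < (j : ℕ) := hij
  omega

/-! ### The generating function expansion -/

/-- tuples with values in `{0,1,3}`. -/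
def Vset (n : ℕ) : Finset (Fin n → ℕ) := Fintype.piFinset fun _ => ({0, 1, 3} : Finset ℕ)

/-- index pairs `(k,l)` with `k + l ≤ n`. -/
def Tset (n : ℕ) : Finset (ℕ × ℕ) :=
  (Finset.range (n + 1) ×ˢ Finset.range (n + 1)).filter fun p => p.1 + p.2 ≤ n

lemma prod_ite_one_count (β : Fin n → ℕ) (x : Rt) :
    (∏ j, if β j = 1 then x else 1) = x ^ cnt 1 β := by
  rw [← Finset.prod_filter_mul_prod_filter_not Finset.univ (fun j => β j = 1)]
  rw [Finset.prod_congr rfl (fun j hj => if_pos (Finset.mem_filter.1 hj).2),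
    Finset.prod_congr rfl (fun j (hj : j ∈ Finset.univ.filter (fun j => ¬ β j = 1)) =>
      if_neg (Finset.mem_filter.1 hj).2),
    Finset.prod_const, Finset.prod_const_one, mul_one]
  rfl

lemma claimA1 :
    (∏ j : Fin n, (1 + C Polynomial.X * X j + X j ^ 3 : MvPolynomial (Fin n) Rt))
      = ∑ β ∈ Vset n, C (Polynomial.X ^ cnt 1 β) * ∏ j, X j ^ β j := by
  have hfac : ∀ j : Fin n, (1 + C Polynomial.X * X j + X j ^ 3 : MvPolynomial (Fin n) Rt)
      = ∑ d ∈ ({0, 1, 3} : Finset ℕ),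
          C (if d = 1 then (Polynomial.X : Rt) else 1) * X j ^ d := by
    intro j
    rw [show ({0, 1, 3} : Finset ℕ) = {0, 0 + 1, 0 + 3} from rfl, sum3]
    norm_num
  rw [Finset.prod_congr rfl fun j _ => hfac j, Finset.prod_univ_sum]
  refine Finset.sum_congr rfl fun β _ => ?_
  rw [Finset.prod_mul_distrib, ← map_prod, prod_ite_one_count]

lemma mem_Vset_iff (β : Fin n → ℕ) :
    β ∈ Vset n ↔ ∀ j, β j = 0 ∨ β j = 1 ∨ β j = 3 := by
  rw [Vset, Fintype.mem_piFinset]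
  refine forall_congr' fun j => ?_
  simp [Finset.mem_insert]

lemma cnt_eq_zero_of_vals {β : Fin n → ℕ} (hβ : ∀ j, β j = 0 ∨ β j = 1 ∨ β j = 3)
    (v : ℕ) (hv : v ≠ 0 ∧ v ≠ 1 ∧ v ≠ 3) : cnt v β = 0 := by
  rw [cnt, Finset.card_eq_zero, Finset.filter_eq_empty_iff]
  intro j _
  rcases hβ j with h | h | h <;> omega

lemma mem_image_perms {β : Fin n → ℕ} (hβ : ∀ j, β j = 0 ∨ β j = 1 ∨ β j = 3) :
    β ∈ Finset.univ.image
      (fun σ : Equiv.Perm (Fin n) => tuple3 n (cnt 1 β) 0 (cnt 3 β) ∘ σ) := by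
  classical
  have htot := cnt_total hβ
  have hle : cnt 1 β + cnt 3 β ≤ n := by omega
  obtain ⟨σ, hσ⟩ : ∃ σ : Equiv.Perm (Fin n), (tuple3 n (cnt 1 β) 0 (cnt 3 β)) ∘ σ = β := by
    apply exists_perm_comp
    intro v
    by_cases h0 : v = 0
    · subst h0
      rw [cnt_tuple3_zero _ _ hle]
      omega
    by_cases h1 : v = 1
    · subst h1
      rw [cnt_tuple3_one _ _ hle]
    by_cases h3 : v = 3
    · subst h3
      rw [cnt_tuple3_three _ _ hle]
    · rw [cnt_tuple3_other _ _ _ ⟨h0, h1, h3⟩, cnt_eq_zero_of_vals hβ v ⟨h0, h1, h3⟩]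
  exact Finset.mem_image.2 ⟨σ, Finset.mem_univ _, hσ⟩

lemma cnt_of_mem_image {β : Fin n → ℕ} {k l : ℕ} (hkl : k + l ≤ n)
    (hβ : β ∈ Finset.univ.image (fun σ : Equiv.Perm (Fin n) => tuple3 n k 0 l ∘ σ)) :
    cnt 1 β = k ∧ cnt 3 β = l ∧ (∀ j, β j = 0 ∨ β j = 1 ∨ β j = 3) := by
  obtain ⟨σ, _, rfl⟩ := Finset.mem_image.1 hβ
  refine ⟨?_, ?_, fun j => tuple3_mem k l (σ j)⟩
  · rw [cnt_comp_perm, cnt_tuple3_one _ _ hkl]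
  · rw [cnt_comp_perm, cnt_tuple3_three _ _ hkl]

lemma Vset_eq_biUnion : Vset n = (Tset n).biUnion
    (fun p => Finset.univ.image fun σ : Equiv.Perm (Fin n) => tuple3 n p.1 0 p.2 ∘ σ) := by
  classical
  ext β
  rw [Finset.mem_biUnion]
  constructor
  · intro hβ
    have hv := (mem_Vset_iff β).1 hβ
    have htot := cnt_total hv
    refine ⟨(cnt 1 β, cnt 3 β), ?_, mem_image_perms hv⟩
    rw [Tset, Finset.mem_filter, Finset.mem_product, Finset.mem_range, Finset.mem_range]
    exact ⟨⟨by omega, by omega⟩, by omega⟩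
  · rintro ⟨p, hp, hβ⟩
    rw [Tset, Finset.mem_filter] at hp
    obtain ⟨-, -, hv⟩ := cnt_of_mem_image hp.2 hβ
    exact (mem_Vset_iff β).2 hv

lemma pairwiseDisjoint_images : (↑(Tset n) : Set (ℕ × ℕ)).PairwiseDisjoint
    (fun p => Finset.univ.image fun σ : Equiv.Perm (Fin n) => tuple3 n p.1 0 p.2 ∘ σ) := by
  classical
  intro p hp q hq hpq
  rw [Finset.mem_coe, Tset, Finset.mem_filter] at hp hq
  refine Finset.disjoint_left.2 fun β hβp hβq => ?_
  obtain ⟨h1p, h3p, -⟩ := cnt_of_mem_image hp.2 hβp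
  obtain ⟨h1q, h3q, -⟩ := cnt_of_mem_image hq.2 hβq
  exact hpq (Prod.ext (by omega) (by omega))

lemma claimA :
    (∏ j : Fin n, (1 + C Polynomial.X * X j + X j ^ 3 : MvPolynomial (Fin n) Rt))
      = ∑ p ∈ Tset n, C (Polynomial.X ^ p.1) *
          MvPolynomial.map (Polynomial.C : ℤ →+* Rt) (msym n (tuple3 n p.1 0 p.2)) := by
  classical
  rw [claimA1, Vset_eq_biUnion, Finset.sum_biUnion pairwiseDisjoint_images]
  refine Finset.sum_congr rfl fun p hp => ?_
  rw [Tset, Finset.mem_filter] at hp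
  have hmap : MvPolynomial.map (Polynomial.C : ℤ →+* Rt) (msym n (tuple3 n p.1 0 p.2))
      = ∑ β ∈ Finset.univ.image (fun σ : Equiv.Perm (Fin n) => tuple3 n p.1 0 p.2 ∘ σ),
          ∏ j, (X j : MvPolynomial (Fin n) Rt) ^ β j := by
    rw [msym, map_sum]
    refine Finset.sum_congr rfl fun β _ => ?_
    rw [xpow, map_prod]
    refine Finset.prod_congr rfl fun j _ => ?_
    rw [map_pow, MvPolynomial.map_X]
  rw [hmap, Finset.mul_sum]
  refine Finset.sum_congr rfl fun β hβ => ?_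
  obtain ⟨h1, -, -⟩ := cnt_of_mem_image hp.2 hβ
  rw [h1]

/-! ### Way 1: the coefficient as a banded determinant -/

/-- the banded `b × b` matrix whose determinant drives the recurrence. -/
def Cmat (b : ℕ) : Matrix (Fin b) (Fin b) Rt :=
  Matrix.of fun r s => (if (r : ℕ) = (s : ℕ) + 2 then (1 : Rt) else 0)
    + (if (r : ℕ) = (s : ℕ) + 1 then Polynomial.X else 0)
    + (if (s : ℕ) = (r : ℕ) + 1 then 1 else 0)

lemma entry_sum_eq (i g : ℕ) : (∑ d ∈ ({i, i + 1, i + 3} : Finset ℕ),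
    if g = d then (if d = i + 1 then (Polynomial.X : Rt) else 1) else 0)
    = (if g = i then 1 else 0) + (if g = i + 1 then Polynomial.X else 0)
      + (if g = i + 3 then 1 else 0) := by
  rw [sum3]
  split_ifs <;> first | (exfalso; omega) | ring_nf

lemma way1_det (b : ℕ) (hbn : b ≤ n) :
    coeff (fs fun j : Fin n => tuple3 n 0 b 0 j + (j : ℕ))
      ((∏ j : Fin n, (1 + C Polynomial.X * X j + X j ^ 3)) *
        MvPolynomial.map (Polynomial.C : ℤ →+* Rt) (aDet n (deltaN n)))
      = (Cmat b).det := by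
  classical
  -- the exponent target
  set γ : Fin n → ℕ := fun j => if (j : ℕ) < n - b then (j : ℕ) else (j : ℕ) + 2 with hγ
  have hγeq : (fun j : Fin n => tuple3 n 0 b 0 j + (j : ℕ)) = γ := by
    funext j
    rw [tuple3_b_apply b hbn j]
    simp only [hγ]
    split_ifs <;> omega
  rw [hγeq]
  -- step 1: the product times the alternant is a determinant
  have hdet : MvPolynomial.map (Polynomial.C : ℤ →+* Rt) (aDet n (deltaN n))
      = (Matrix.of fun i j : Fin n => (X j : MvPolynomial (Fin n) Rt) ^ (i : ℕ)).det := by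
    rw [aDet, RingHom.map_det]
    congr 1
    ext i j
    simp [deltaN]
  rw [hdet, ← Matrix.det_mul_row (fun j : Fin n => (1 + C Polynomial.X * X j + X j ^ 3))]
  have hmat : (Matrix.of fun i j : Fin n => (1 + C Polynomial.X * X j + X j ^ 3) *
        (Matrix.of fun i j : Fin n => (X j : MvPolynomial (Fin n) Rt) ^ (i : ℕ)) i j)
      = Matrix.of fun i j : Fin n => ∑ d ∈ ({(i : ℕ), (i : ℕ) + 1, (i : ℕ) + 3} : Finset ℕ),
          C (if d = (i : ℕ) + 1 then (Polynomial.X : Rt) else 1) * X j ^ d := by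
    refine Matrix.ext fun i j => ?_
    show (1 + C Polynomial.X * X j + X j ^ 3) * (X j : MvPolynomial (Fin n) Rt) ^ (i : ℕ) = _
    simp only [Matrix.of_apply]
    rw [sum3]
    rw [if_neg (by omega : ¬ (i : ℕ) = (i : ℕ) + 1), if_pos rfl,
      if_neg (by omega : ¬ (i : ℕ) + 3 = (i : ℕ) + 1)]
    simp only [map_one]
    ring_nf
  rw [hmat, coeff_det_single (fun i : Fin n => ({(i : ℕ), (i : ℕ) + 1, (i : ℕ) + 3} : Finset ℕ))
    (fun i d => if d = (i : ℕ) + 1 then (Polynomial.X : Rt) else 1) γ]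
  -- step 2: identify the coefficient matrix and decompose into blocks
  have hAmat : (Matrix.of fun i j : Fin n =>
      ∑ d ∈ ({(i : ℕ), (i : ℕ) + 1, (i : ℕ) + 3} : Finset ℕ),
        if γ j = d then (if d = (i : ℕ) + 1 then (Polynomial.X : Rt) else 1) else 0)
      = Matrix.of fun i j : Fin n =>
          (if γ j = (i : ℕ) then (1 : Rt) else 0) + (if γ j = (i : ℕ) + 1 then Polynomial.X else 0)
            + (if γ j = (i : ℕ) + 3 then 1 else 0) := by
    refine Matrix.ext fun i j => ?_
    exact entry_sum_eq (i : ℕ) (γ j)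
  rw [hAmat]
  -- block decomposition
  have hnb : (n - b) + b = n := by omega
  set e : Fin (n - b) ⊕ Fin b ≃ Fin n := finSumFinEquiv.trans (finCongr hnb) with he
  set M : Matrix (Fin n) (Fin n) Rt := Matrix.of fun i j : Fin n =>
      (if γ j = (i : ℕ) then (1 : Rt) else 0) + (if γ j = (i : ℕ) + 1 then Polynomial.X else 0)
        + (if γ j = (i : ℕ) + 3 then 1 else 0) with hM
  rw [← Matrix.det_submatrix_equiv_self e M]
  have hblocks : M.submatrix e e = Matrix.fromBlocks
      ((M.submatrix e e).toBlocks₁₁) ((M.submatrix e e).toBlocks₁₂)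
      ((M.submatrix e e).toBlocks₂₁) ((M.submatrix e e).toBlocks₂₂) :=
    (Matrix.fromBlocks_toBlocks _).symm
  have hval_inl : ∀ r : Fin (n - b), ((e (Sum.inl r)) : ℕ) = (r : ℕ) := by
    intro r; simp [he]
  have hval_inr : ∀ r : Fin b, ((e (Sum.inr r)) : ℕ) = (n - b) + (r : ℕ) := by
    intro r; simp [he]
  have hγ_inl : ∀ s : Fin (n - b), γ (e (Sum.inl s)) = (s : ℕ) := by
    intro s
    simp only [hγ]
    have := s.isLt
    rw [hval_inl s]
    split_ifs <;> omega
  have hγ_inr : ∀ s : Fin b, γ (e (Sum.inr s)) = (n - b) + (s : ℕ) + 2 := by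
    intro s
    simp only [hγ]
    have := s.isLt
    rw [hval_inr s]
    split_ifs <;> omega
  have h21 : (M.submatrix e e).toBlocks₂₁ = 0 := by
    refine Matrix.ext fun r s => ?_
    show M (e (Sum.inr r)) (e (Sum.inl s)) = 0
    rw [hM]
    show (if γ (e (Sum.inl s)) = ((e (Sum.inr r)) : ℕ) then (1 : Rt) else 0)
      + (if γ (e (Sum.inl s)) = ((e (Sum.inr r)) : ℕ) + 1 then Polynomial.X else 0)
      + (if γ (e (Sum.inl s)) = ((e (Sum.inr r)) : ℕ) + 3 then 1 else 0) = 0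
    rw [hγ_inl s, hval_inr r]
    have hs := s.isLt
    rw [if_neg (by omega), if_neg (by omega), if_neg (by omega)]
    simp
  have h22 : (M.submatrix e e).toBlocks₂₂ = Cmat b := by
    refine Matrix.ext fun r s => ?_
    show M (e (Sum.inr r)) (e (Sum.inr s)) = Cmat b r s
    rw [hM, Cmat]
    show (if γ (e (Sum.inr s)) = ((e (Sum.inr r)) : ℕ) then (1 : Rt) else 0)
      + (if γ (e (Sum.inr s)) = ((e (Sum.inr r)) : ℕ) + 1 then Polynomial.X else 0)
      + (if γ (e (Sum.inr s)) = ((e (Sum.inr r)) : ℕ) + 3 then 1 else 0) = _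
    rw [hγ_inr s, hval_inr r]
    show _ = (if (r : ℕ) = (s : ℕ) + 2 then (1 : Rt) else 0)
      + (if (r : ℕ) = (s : ℕ) + 1 then Polynomial.X else 0)
      + (if (s : ℕ) = (r : ℕ) + 1 then 1 else 0)
    congr 1
    · congr 1
      · by_cases h : (r : ℕ) = (s : ℕ) + 2
        · rw [if_pos (by omega), if_pos h]
        · rw [if_neg (by omega), if_neg h]
      · by_cases h : (r : ℕ) = (s : ℕ) + 1
        · rw [if_pos (by omega), if_pos h]
        · rw [if_neg (by omega), if_neg h]
    · by_cases h : (s : ℕ) = (r : ℕ) + 1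
      · rw [if_pos (by omega), if_pos h]
      · rw [if_neg (by omega), if_neg h]
  have h11det : ((M.submatrix e e).toBlocks₁₁).det = 1 := by
    have htri : ((M.submatrix e e).toBlocks₁₁).BlockTriangular id := by
      intro r s hrs
      show M (e (Sum.inl r)) (e (Sum.inl s)) = 0
      rw [hM]
      show (if γ (e (Sum.inl s)) = ((e (Sum.inl r)) : ℕ) then (1 : Rt) else 0)
        + (if γ (e (Sum.inl s)) = ((e (Sum.inl r)) : ℕ) + 1 then Polynomial.X else 0)
        + (if γ (e (Sum.inl s)) = ((e (Sum.inl r)) : ℕ) + 3 then 1 else 0) = 0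
      rw [hγ_inl s, hval_inl r]
      have hsr : (s : ℕ) < (r : ℕ) := hrs
      rw [if_neg (by omega), if_neg (by omega), if_neg (by omega)]
      simp
    rw [Matrix.det_of_upperTriangular htri]
    refine Finset.prod_eq_one fun r _ => ?_
    show M (e (Sum.inl r)) (e (Sum.inl r)) = 1
    rw [hM]
    show (if γ (e (Sum.inl r)) = ((e (Sum.inl r)) : ℕ) then (1 : Rt) else 0)
      + (if γ (e (Sum.inl r)) = ((e (Sum.inl r)) : ℕ) + 1 then Polynomial.X else 0)
      + (if γ (e (Sum.inl r)) = ((e (Sum.inl r)) : ℕ) + 3 then 1 else 0) = 1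
    rw [hγ_inl r, hval_inl r]
    rw [if_pos rfl, if_neg (by omega), if_neg (by omega)]
    simp
  rw [hblocks, h21, Matrix.det_fromBlocks_zero₂₁, h11det, h22, one_mul]

/-! ### Way 2: the coefficient via the inverse Kostka property -/

lemma inner_sum_collapse (m b : ℕ) (hb : b ≤ n) (c : (Fin n → ℕ) → ℤ) :
    (∑ μ ∈ Par n m, Polynomial.C (c μ) * Polynomial.C
        (if (fun j : Fin n => tuple3 n 0 b 0 j + (j : ℕ)) = (fun i => μ i + (i : ℕ))
          then (1 : ℤ) else 0))
      = if m = 2 * b then Polynomial.C (c (tuple3 n 0 b 0)) else 0 := by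
  classical
  have hkey : ∀ μ : Fin n → ℕ, ((fun j : Fin n => tuple3 n 0 b 0 j + (j : ℕ))
      = fun i => μ i + (i : ℕ)) ↔ μ = tuple3 n 0 b 0 := by
    intro μ
    constructor
    · intro h
      funext i
      have := congrFun h i
      omega
    · intro h
      subst h
      rfl
  by_cases hm : m = 2 * b
  · subst hm
    rw [if_pos rfl]
    rw [Finset.sum_eq_single_of_mem (tuple3 n 0 b 0) (tuple3_b_mem_Par b hb)]
    · rw [if_pos ((hkey _).2 rfl)]
      simp
    · intro μ hμ hne
      rw [if_neg fun h => hne ((hkey μ).1 h)]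
      simp
  · rw [if_neg hm]
    refine Finset.sum_eq_zero fun μ hμ => ?_
    rw [Par, Finset.mem_filter] at hμ
    rw [if_neg fun h => ?_]
    · simp
    · apply hm
      have hμb := (hkey μ).1 h
      subst hμb
      rw [← hμ.2.2, tuple3_b_sum b hb]

lemma way2_sum (b : ℕ) (hbn : 2 * b ≤ n) (K : (Fin n → ℕ) → (Fin n → ℕ) → ℤ)
    (hK : IsInvKostka n K) :
    coeff (fs fun j : Fin n => tuple3 n 0 b 0 j + (j : ℕ))
      ((∏ j : Fin n, (1 + C Polynomial.X * X j + X j ^ 3)) *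
        MvPolynomial.map (Polynomial.C : ℤ →+* Rt) (aDet n (deltaN n)))
      = ∑ l ∈ Finset.range (2 * b / 3 + 1),
          Polynomial.C (K (tuple3 n (2 * b - 3 * l) 0 l) (tuple3 n 0 b 0)) *
            Polynomial.X ^ (2 * b - 3 * l) := by
  classical
  rw [claimA, Finset.sum_mul, MvPolynomial.coeff_sum]
  have hterm : ∀ p ∈ Tset n,
      coeff (fs fun j : Fin n => tuple3 n 0 b 0 j + (j : ℕ))
        ((C (Polynomial.X ^ p.1) *
          MvPolynomial.map (Polynomial.C : ℤ →+* Rt) (msym n (tuple3 n p.1 0 p.2))) *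
          MvPolynomial.map (Polynomial.C : ℤ →+* Rt) (aDet n (deltaN n)))
      = Polynomial.X ^ p.1 * (if p.1 + 3 * p.2 = 2 * b
          then Polynomial.C (K (tuple3 n p.1 0 p.2) (tuple3 n 0 b 0)) else 0) := by
    intro p hp
    rw [Tset, Finset.mem_filter] at hp
    rw [mul_assoc, ← map_mul, MvPolynomial.coeff_C_mul]
    congr 1
    rw [hK (p.1 + 3 * p.2) (tuple3 n p.1 0 p.2) (tuple3_mem_Par p.1 p.2 hp.2), map_sum]
    rw [MvPolynomial.coeff_sum]
    have hmem : ∀ μ ∈ Par n (p.1 + 3 * p.2),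
        coeff (fs fun j : Fin n => tuple3 n 0 b 0 j + (j : ℕ))
          (MvPolynomial.map (Polynomial.C : ℤ →+* Rt)
            (C (K (tuple3 n p.1 0 p.2) μ) * aDet n fun i => μ i + (i : ℕ)))
        = Polynomial.C (K (tuple3 n p.1 0 p.2) μ) * Polynomial.C
            (if (fun j : Fin n => tuple3 n 0 b 0 j + (j : ℕ)) = (fun i => μ i + (i : ℕ))
              then (1 : ℤ) else 0) := by
      intro μ hμ
      rw [map_mul, MvPolynomial.map_C, MvPolynomial.coeff_C_mul, MvPolynomial.coeff_map]
      congr 1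
      rw [Par, Finset.mem_filter] at hμ
      rw [coeff_aDet _ _ (strictMono_add_val hμ.2.1)
        (strictMono_add_val (tuple3_monotone 0 b 0))]
  
    rw [Finset.sum_congr rfl hmem, inner_sum_collapse _ b (by omega) _]
  rw [Finset.sum_congr rfl hterm]
  simp only [mul_ite, mul_zero]
  rw [← Finset.sum_filter]
  refine Finset.sum_nbij' (fun p => p.2) (fun l => (2 * b - 3 * l, l)) ?_ ?_ ?_ ?_ ?_
  · intro p hp
    beta_reduce
    rw [Finset.mem_filter, Tset, Finset.mem_filter] at hp
    have h2 := hp.2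
    rw [Finset.mem_range]
    omega
  · intro l hl
    beta_reduce
    rw [Finset.mem_range] at hl
    rw [Finset.mem_filter, Tset, Finset.mem_filter, Finset.mem_product,
      Finset.mem_range, Finset.mem_range]
    refine ⟨⟨⟨?_, ?_⟩, ?_⟩, ?_⟩ <;> omega
  · intro p hp
    beta_reduce
    rw [Finset.mem_filter] at hp
    obtain ⟨p1, p2⟩ := p
    have h2 : p1 + 3 * p2 = 2 * b := hp.2
    simp only [Prod.mk.injEq]
    refine ⟨by omega, by trivial⟩
  · intro l hl
    rfl
  · intro p hp
    beta_reduce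
    rw [Finset.mem_filter] at hp
    have h1 : p.1 = 2 * b - 3 * p.2 := by
      have h2 := hp.2
      omega
    rw [h1, mul_comm]

/-! ### The determinant recurrence -/

noncomputable def bandEntry (r s : ℕ) : Rt :=
  (if r = s + 2 then (1 : Rt) else 0) + (if r = s + 1 then Polynomial.X else 0)
    + (if s = r + 1 then 1 else 0)

lemma cmat_apply (b : ℕ) (r s : Fin b) : Cmat b r s = bandEntry (r : ℕ) (s : ℕ) := rfl

lemma val_succAbove {n : ℕ} (i : Fin (n + 1)) (s : Fin n) :
    ((i.succAbove s) : ℕ) = if (s : ℕ) < (i : ℕ) then (s : ℕ) else (s : ℕ) + 1 := by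
  rw [Fin.succAbove]
  by_cases h : Fin.castSucc s < i
  · rw [if_pos h, if_pos (by exact_mod_cast h)]
    rfl
  · rw [if_neg h, if_neg (by rw [Fin.lt_iff_val_lt_val] at h; exact_mod_cast h)]
    rfl

lemma bandEntry_eq_zero {r s : ℕ} (h1 : r ≠ s + 2) (h2 : r ≠ s + 1) (h3 : s ≠ r + 1) :
    bandEntry r s = 0 := by
  rw [bandEntry, if_neg h1, if_neg h2, if_neg h3]
  simp

lemma bandEntry_shift (r s : ℕ) : bandEntry (r + 1) (s + 1) = bandEntry r s := by
  rw [bandEntry, bandEntry]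
  congr 1
  · congr 1
    · by_cases h : r = s + 2
      · rw [if_pos (by omega), if_pos h]
      · rw [if_neg (by omega), if_neg h]
    · by_cases h : r = s + 1
      · rw [if_pos (by omega), if_pos h]
      · rw [if_neg (by omega), if_neg h]
  · by_cases h : s = r + 1
    · rw [if_pos (by omega), if_pos h]
    · rw [if_neg (by omega), if_neg h]

lemma cmat_det_rec (m : ℕ) :
    (Cmat (m + 3)).det = -Polynomial.X * (Cmat (m + 1)).det + (Cmat m).det := by
  classical
  rw [show (Cmat (m + 3)).det = (Cmat (m + 2 + 1)).det from rfl, Matrix.det_succ_row_zero]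
  have hrow0 : ∀ j : Fin (m + 2 + 1), (Cmat (m + 2 + 1)) 0 j
      = if (j : ℕ) = 1 then (1 : Rt) else 0 := by
    intro j
    rw [cmat_apply]
    simp only [Fin.val_zero]
    by_cases h : (j : ℕ) = 1
    · rw [if_pos h, bandEntry, if_neg (by omega), if_neg (by omega), if_pos (by omega)]
      simp
    · rw [if_neg h, bandEntry_eq_zero (by omega) (by omega) (by omega)]
  rw [Finset.sum_eq_single (1 : Fin (m + 2 + 1))]
  · -- the surviving term
    rw [hrow0, if_pos (by simp), Fin.val_one, pow_one, mul_one]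
    set E := (Cmat (m + 2 + 1)).submatrix Fin.succ (Fin.succAbove 1) with hE
    have hEentry : ∀ (r s : Fin (m + 2)), E r s
        = bandEntry ((r : ℕ) + 1) (if (s : ℕ) < 1 then (s : ℕ) else (s : ℕ) + 1) := by
      intro r s
      rw [hE, Matrix.submatrix_apply, cmat_apply, Fin.val_succ, val_succAbove, Fin.val_one]
    rw [show E.det = (E : Matrix (Fin (m + 1 + 1)) (Fin (m + 1 + 1)) Rt).det from rfl,
      Matrix.det_succ_column_zero]
    rw [Fin.sum_univ_succ, Fin.sum_univ_succ]
    have hrest : ∀ i : Fin m, ((-1 : Rt) ^ (((i.succ.succ : Fin (m + 1 + 1))) : ℕ)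
        * E i.succ.succ 0 * (E.submatrix (Fin.succAbove i.succ.succ) Fin.succ).det) = 0 := by
      intro i
      have hz : E i.succ.succ 0 = 0 := by
        rw [hEentry]
        simp only [Fin.val_succ]
        rw [Fin.val_zero, if_pos (by omega)]
        exact bandEntry_eq_zero (by omega) (by omega) (by omega)
      rw [hz, mul_zero, zero_mul]
    rw [Finset.sum_congr rfl fun i _ => hrest i, Finset.sum_const, smul_zero, add_zero]
    have hE00 : E 0 0 = Polynomial.X := by
      rw [hEentry]
      rw [Fin.val_zero, if_pos (by omega), bandEntry, if_neg (by omega), if_pos rfl, if_neg (by omega)]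
      simp
    have hE10 : E (Fin.succ 0) 0 = 1 := by
      rw [hEentry]
      simp only [Fin.val_succ]
      rw [Fin.val_zero, Fin.val_zero, if_pos (by omega), bandEntry, if_pos rfl, if_neg (by omega), if_neg (by omega)]
      simp
    have hminor0 : (E.submatrix (Fin.succAbove 0) Fin.succ) = Cmat (m + 1) := by
      refine Matrix.ext fun r s => ?_
      rw [Matrix.submatrix_apply, hEentry, cmat_apply]
      rw [val_succAbove]
      simp only [Fin.val_succ]
      rw [Fin.val_zero, if_neg (by omega), if_neg (by omega)]
      rw [show (s : ℕ) + 1 + 1 = ((s : ℕ) + 1) + 1 from rfl, bandEntry_shift, bandEntry_shift]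
    have hminor1 : (E.submatrix (Fin.succAbove (Fin.succ 0)) Fin.succ).det = (Cmat m).det := by
      rw [show (E.submatrix (Fin.succAbove (Fin.succ 0)) Fin.succ).det
        = ((E.submatrix (Fin.succAbove (Fin.succ 0)) Fin.succ :
            Matrix (Fin (m + 1)) (Fin (m + 1)) Rt)).det from rfl,
        Matrix.det_succ_row_zero]
      have hGrow0 : ∀ s : Fin (m + 1), (E.submatrix (Fin.succAbove (Fin.succ 0)) Fin.succ) 0 s
          = if (s : ℕ) = 0 then (1 : Rt) else 0 := by
        intro s
        rw [Matrix.submatrix_apply, hEentry, val_succAbove]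
        rw [if_pos (by simp), if_neg (by simp)]
        simp only [Fin.val_succ, Fin.val_zero]
        by_cases h : (s : ℕ) = 0
        · rw [if_pos h, bandEntry, if_neg (by omega), if_neg (by omega), if_pos (by omega)]
          simp
        · rw [if_neg h, bandEntry_eq_zero (by omega) (by omega) (by omega)]
      rw [Finset.sum_eq_single (0 : Fin (m + 1))]
      · rw [hGrow0]
        simp only [Fin.val_zero, if_true, pow_zero, one_mul]
        congr 1
        refine Matrix.ext fun r s => ?_
        rw [Matrix.submatrix_apply, Matrix.submatrix_apply, hEentry, cmat_apply]
        rw [val_succAbove]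
        rw [if_neg (by simp), if_neg (by simp)]
        simp only [Fin.val_succ]
        rw [val_succAbove]
        rw [if_neg (by simp)]
        rw [show (s : ℕ) + 1 + 1 + 1 = (((s : ℕ) + 1) + 1) + 1 from rfl,
          show (r : ℕ) + 1 + 1 + 1 = (((r : ℕ) + 1) + 1) + 1 from rfl,
          bandEntry_shift, bandEntry_shift, bandEntry_shift]
      · intro s _ hs
        rw [hGrow0, if_neg (fun h => hs (by apply Fin.ext; simpa using h))]
        ring
      · intro h
        exact absurd (Finset.mem_univ _) h
    rw [hE00, hE10, hminor0, hminor1]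
    simp only [Fin.val_zero, Fin.val_succ, pow_zero, pow_succ, pow_one]
    ring
  · intro j _ hj
    rw [hrow0, if_neg (fun h => hj (by apply Fin.ext; simpa using h))]
    ring
  · intro h
    exact absurd (Finset.mem_univ _) h

lemma hpoly_eq_det (b : ℕ) (hbn : 2 * b ≤ n) (K : (Fin n → ℕ) → (Fin n → ℕ) → ℤ)
    (hK : IsInvKostka n K) : hpoly n K b = (Cmat b).det := by
  rw [hpoly, ← way2_sum b hbn K hK, way1_det b (by omega)]

end Aux19

/-- The recurrence `h_b(t) = -t·h_{b-2}(t) + h_{b-3}(t)` for `b ≥ 3`. -/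
theorem stmt19 (n b : ℕ) (hb : 3 ≤ b) (hn : 2 * b ≤ n)
    (K : (Fin n → ℕ) → (Fin n → ℕ) → ℤ) (hK : IsInvKostka n K) :
    hpoly n K b = -Polynomial.X * hpoly n K (b - 2) + hpoly n K (b - 3) := by
  obtain ⟨m, rfl⟩ : ∃ m, b = m + 3 := ⟨b - 3, by omega⟩
  rw [show m + 3 - 2 = m + 1 from by omega, show m + 3 - 3 = m from by omega]
  rw [hpoly_eq_det (m + 3) hn K hK, hpoly_eq_det (m + 1) (by omega) K hK,
    hpoly_eq_det m (by omega) K hK]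
  exact cmat_det_rec m
end
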